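/- arXiv:1408.2614 — 9 statements merged into one kernel-verified Lean document; each statement's English description precedes it below -/
import Mathlib

section
/- Let x̄ be a feasible point for problem (VP) and d ∈ ℝ^s a direction. Suppose all active constraint functions g_i, i ∈ I(x̄), are continuously differentiable on X and that the second-order directional derivative g_i''(x̄,d) exists for every i ∈ I(x̄) with ∇g_i(x̄)d = 0. Then A(x̄,d) ⊆ B(x̄,d). -/
open Set Filter Topology

noncomputable section

/-- The second-order directional derivative of `h` at `x` in direction `u` equals `D`:
`D = lim_{t→0+} 2 t⁻² [h(x+tu) − h(x) − t ∇h(x)u]`. -/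
def HasDirDeriv2 {s : ℕ} (h : (Fin s → ℝ) → ℝ) (x u : Fin s → ℝ) (D : ℝ) : Prop :=
  Filter.Tendsto (fun t : ℝ => 2 / t ^ 2 * (h (x + t • u) - h x - t * fderiv ℝ h x u))
    (𝓝[>] (0 : ℝ)) (𝓝 D)

/-- The set `A(x,d)`: `z` such that for every active index `i` with `∇g_i(x)d = 0`
(i.e. `i ∈ K(x,d)`) there is `δ > 0` with `g_i(x + td + 0.5 t² z) ≤ 0` for all `t ∈ (0,δ)`. -/
def setA {s : ℕ} (m : ℕ) (g : Fin m → (Fin s → ℝ) → ℝ) (x d : Fin s → ℝ) :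
    Set (Fin s → ℝ) :=
  {z | ∀ i, g i x = 0 → fderiv ℝ (g i) x d = 0 →
    ∃ δ > 0, ∀ t ∈ Ioo (0 : ℝ) δ, g i (x + t • d + (t ^ 2 / 2) • z) ≤ 0}

/-- The set `B(x,d)`: `z` such that `∇g_i(x)z + g_i''(x,d) ≤ 0` for every `i ∈ K(x,d)`,
where `gdd i` denotes the value `g_i''(x,d)`. -/
def setB {s : ℕ} (m : ℕ) (g : Fin m → (Fin s → ℝ) → ℝ) (x d : Fin s → ℝ)
    (gdd : Fin m → ℝ) : Set (Fin s → ℝ) :=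
  {z | ∀ i, g i x = 0 → fderiv ℝ (g i) x d = 0 → fderiv ℝ (g i) x z + gdd i ≤ 0}

/-- if `x̄` is feasible, the active constraints are continuously differentiable
on an open set `X`, and `g_i''(x̄,d)` exists for every `i ∈ K(x̄,d)`, then `A(x̄,d) ⊆ B(x̄,d)`. -/
theorem statement0 {s m : ℕ} (X : Set (Fin s → ℝ)) (hX : IsOpen X)
    (g : Fin m → (Fin s → ℝ) → ℝ) (xbar d : Fin s → ℝ)
    (hxX : xbar ∈ X) (hfeas : ∀ i, g i xbar ≤ 0)
    (hC1 : ∀ i, g i xbar = 0 → ContDiffOn ℝ 1 (g i) X)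
    (gdd : Fin m → ℝ)
    (hgdd : ∀ i, g i xbar = 0 → fderiv ℝ (g i) xbar d = 0 →
      HasDirDeriv2 (g i) xbar d (gdd i)) :
    setA m g xbar d ⊆ setB m g xbar d gdd := by
  intro z hz i hi hdi
  have hXnhds : X ∈ 𝓝 xbar := hX.mem_nhds hxX
  have hca : ContDiffAt ℝ 1 (g i) xbar := (hC1 i hi).contDiffAt hXnhds
  set φ := fderiv ℝ (g i) xbar with hφ
  have hstrict : HasStrictFDerivAt (g i) φ xbar := hca.hasStrictFDerivAt one_ne_zero
  obtain ⟨δ, hδ, hle⟩ := hz i hi hdi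
  set v : ℝ → (Fin s → ℝ) := fun t => xbar + t • d + (t ^ 2 / 2) • z with hv
  set u : ℝ → (Fin s → ℝ) := fun t => xbar + t • d with hu
  -- the pair (v t, u t) tends to (xbar, xbar)
  have htend_uv : Tendsto (fun t : ℝ => (v t, u t)) (𝓝[>] (0:ℝ)) (𝓝 (xbar, xbar)) := by
    have hc : ContinuousAt (fun t : ℝ => (v t, u t)) 0 := by
      simp only [hv, hu]; fun_prop
    have h0 : Tendsto (fun t : ℝ => (v t, u t)) (𝓝 (0:ℝ)) (𝓝 (v 0, u 0)) := hc.tendsto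
    have : (v 0, u 0) = (xbar, xbar) := by simp [hv, hu]
    rw [this] at h0
    exact h0.mono_left nhdsWithin_le_nhds
  have hlo := hstrict.isLittleO.comp_tendsto htend_uv
  have hvu : ∀ t : ℝ, v t - u t = (t ^ 2 / 2) • z := by
    intro t; simp [hv, hu]
  have hO : (fun t : ℝ => v t - u t) =O[𝓝[>] (0:ℝ)] fun t => t ^ 2 := by
    apply Asymptotics.isBigO_of_le' (c := ‖z‖ / 2)
    intro t
    rw [hvu t, norm_smul]
    have : ‖(t:ℝ)^2/2‖ = t^2/2 := by
      rw [Real.norm_eq_abs, abs_of_nonneg (by positivity)]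
    rw [this]
    have : ‖(t:ℝ)^2‖ = t^2 := by
      rw [Real.norm_eq_abs, abs_of_nonneg (by positivity)]
    rw [this]; ring_nf; rfl
  have hdiv := (hlo.trans_isBigO hO).tendsto_div_nhds_zero
  have hB : Tendsto (fun t => 2 / t ^ 2 * (g i (v t) - g i (u t))) (𝓝[>] (0:ℝ)) (𝓝 (φ z)) := by
    have h2 : Tendsto (fun t => 2 * ((g i (v t) - g i (u t) - φ (v t - u t)) / t ^ 2) + φ z)
        (𝓝[>] (0:ℝ)) (𝓝 (2 * 0 + φ z)) := ((hdiv.const_mul 2).add tendsto_const_nhds)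
    rw [show (2:ℝ) * 0 + φ z = φ z by ring] at h2
    refine h2.congr' ?_
    filter_upwards [self_mem_nhdsWithin] with t ht
    have ht0 : (0:ℝ) < t := ht
    have hφv : φ (v t - u t) = t ^ 2 / 2 * φ z := by
      rw [hvu t, map_smul, smul_eq_mul]
    rw [hφv]
    have ht2 : (t:ℝ) ^ 2 ≠ 0 := by positivity
    field_simp
    ring
  have hA : Tendsto (fun t => 2 / t ^ 2 * g i (u t)) (𝓝[>] (0:ℝ)) (𝓝 (gdd i)) := by
    have h := hgdd i hi hdi
    unfold HasDirDeriv2 at h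
    simpa [hu, hi, hdi, ← hφ] using h
  have hsum : Tendsto (fun t => 2 / t ^ 2 * g i (v t)) (𝓝[>] (0:ℝ)) (𝓝 (gdd i + φ z)) := by
    refine (hA.add hB).congr fun t => ?_
    ring
  have hneg : ∀ᶠ t in 𝓝[>] (0:ℝ), 2 / t ^ 2 * g i (v t) ≤ 0 := by
    filter_upwards [Ioo_mem_nhdsGT_of_mem (left_mem_Ico.2 hδ)] with t ht
    have hgv : g i (v t) ≤ 0 := hle t ht
    have h2 : 0 ≤ 2 / t ^ 2 := by positivity
    exact mul_nonpos_of_nonneg_of_nonpos h2 hgv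
  have hfin : gdd i + φ z ≤ 0 := le_of_tendsto hsum hneg
  show φ z + gdd i ≤ 0
  linarith
end
end

section
/- Let X ⊆ ℝ^s be open, g : X → ℝ continuously differentiable, x̄ ∈ X, and d, z ∈ ℝ^s. Suppose the second-order directional derivative g''(x̄,d) exists. Define φ(t) := g(x̄ + td + 0.5t²z) for t in a neighborhood of 0. Then φ'(0) = ∇g(x̄)d and the second-order right derivative φ''(0,1) := lim_{t→0+} 2t^{-2}[φ(t) − φ(0) − tφ'(0)] exists and equals ∇g(x̄)z + g''(x̄,d). -/
open Set Filter Topology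
open Asymptotics

noncomputable section

/-- for `g` continuously differentiable on the open set `X`, `x̄ ∈ X`, and
`φ(t) := g(x̄ + td + 0.5 t² z)`, one has `φ'(0) = ∇g(x̄)d` and the second-order right derivative
`φ''(0,1) = lim_{t→0+} 2 t⁻² [φ(t) − φ(0) − t φ'(0)]` exists and equals `∇g(x̄)z + g''(x̄,d)`. -/
theorem statement1 {s : ℕ} (X : Set (Fin s → ℝ)) (hX : IsOpen X)
    (g : (Fin s → ℝ) → ℝ) (hg : ContDiffOn ℝ 1 g X)
    (xbar d z : Fin s → ℝ) (hx : xbar ∈ X)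
    (D : ℝ) (hD : HasDirDeriv2 g xbar d D) :
    HasDerivAt (fun t : ℝ => g (xbar + t • d + (t ^ 2 / 2) • z)) (fderiv ℝ g xbar d) 0 ∧
    Filter.Tendsto
      (fun t : ℝ => 2 / t ^ 2 *
        (g (xbar + t • d + (t ^ 2 / 2) • z) - g xbar - t * fderiv ℝ g xbar d))
      (𝓝[>] (0 : ℝ)) (𝓝 (fderiv ℝ g xbar z + D)) := by
  have hst : HasStrictFDerivAt g (fderiv ℝ g xbar) xbar :=
    (hg.contDiffAt (hX.mem_nhds hx)).hasStrictFDerivAt one_ne_zero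
  set f := fderiv ℝ g xbar with hf
  -- the curve and its derivative
  have hcurve : HasDerivAt (fun t : ℝ => xbar + t • d + (t ^ 2 / 2) • z) d 0 := by
    have h1 : HasDerivAt (fun t : ℝ => t • d) ((1:ℝ) • d) 0 :=
      (hasDerivAt_id (0:ℝ)).smul_const d
    have h2 : HasDerivAt (fun t : ℝ => (t ^ 2 / 2)) 0 (0:ℝ) := by
      simpa using ((hasDerivAt_pow 2 (0:ℝ)).div_const 2)
    have h3 := h2.smul_const z
    have := ((hasDerivAt_const (0:ℝ) xbar).add h1).add h3
    exact this.congr_deriv (by simp)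
  have hderiv : HasDerivAt (fun t : ℝ => g (xbar + t • d + (t ^ 2 / 2) • z)) (f d) 0 := by
    have h0 : (fun t : ℝ => xbar + t • d + (t ^ 2 / 2) • z) 0 = xbar := by simp
    have := (h0 ▸ hst.hasFDerivAt).comp_hasDerivAt 0 hcurve
    exact this
  refine ⟨hderiv, ?_⟩
  set c : ℝ → (Fin s → ℝ) := fun t => xbar + t • d + (t ^ 2 / 2) • z with hc
  set e : ℝ → (Fin s → ℝ) := fun t => xbar + t • d with he
  set l : Filter ℝ := 𝓝[>] (0:ℝ)
  have htend : Tendsto (fun t : ℝ => (c t, e t)) l (𝓝 (xbar, xbar)) := by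
    have hcc : Tendsto c l (𝓝 xbar) := by
      have h1 : ContinuousAt c 0 := hcurve.continuousAt
      have h2 : Tendsto c (𝓝 0) (𝓝 xbar) := by
        have h0 : c 0 = xbar := by simp [hc]
        simpa [h0] using h1.tendsto
      exact h2.mono_left nhdsWithin_le_nhds
    have hce : Tendsto e l (𝓝 xbar) := by
      have h1 : Continuous e := by fun_prop
      have h2 : Tendsto e (𝓝 0) (𝓝 xbar) := by
        have h0 : e 0 = xbar := by simp [he]
        simpa [h0] using (h1.tendsto 0)
      exact h2.mono_left nhdsWithin_le_nhds
    exact hcc.prodMk_nhds hce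
  have oh : (fun t => g (c t) - g (e t) - f (c t - e t)) =o[l] fun t => c t - e t :=
    hst.isLittleO.comp_tendsto htend
  have hdiff : ∀ t : ℝ, c t - e t = (t ^ 2 / 2) • z := by
    intro t; simp [hc, he]
  have oh2 : (fun t => g (c t) - g (e t) - f ((t ^ 2 / 2) • z)) =o[l] fun t => t ^ 2 := by
    have hO : (fun t : ℝ => (t ^ 2 / 2) • z) =O[l] fun t => t ^ 2 := by
      rw [isBigO_iff]
      refine ⟨‖z‖, Filter.Eventually.of_forall fun t => ?_⟩
      rw [norm_smul]
      have : ‖t ^ 2 / 2‖ ≤ ‖t ^ 2‖ := by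
        rw [Real.norm_eq_abs, Real.norm_eq_abs,
          abs_of_nonneg (by positivity : (0:ℝ) ≤ t ^ 2 / 2), abs_of_nonneg (sq_nonneg t)]
        linarith [sq_nonneg t]
      calc ‖t ^ 2 / 2‖ * ‖z‖ ≤ ‖t ^ 2‖ * ‖z‖ := by
            exact mul_le_mul_of_nonneg_right this (norm_nonneg z)
        _ = ‖z‖ * ‖t ^ 2‖ := mul_comm _ _
    have oh' : (fun t => g (c t) - g (e t) - f ((t ^ 2 / 2) • z)) =o[l]
        fun t : ℝ => (t ^ 2 / 2) • z := by
      simpa only [hdiff] using oh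
    exact oh'.trans_isBigO hO
  have tend0 : Tendsto (fun t : ℝ =>
      2 / t ^ 2 * (g (c t) - g (e t) - f ((t ^ 2 / 2) • z))) l (𝓝 0) := by
    have h0 := oh2.tendsto_div_nhds_zero
    have := (tendsto_const_nhds (x := (2:ℝ)) (f := l)).mul h0
    rw [mul_zero] at this
    refine this.congr fun t => ?_
    rw [div_mul_eq_mul_div, mul_div_assoc]
  have tendM : Tendsto (fun t : ℝ => 2 / t ^ 2 * f ((t ^ 2 / 2) • z)) l (𝓝 (f z)) := by
    refine Tendsto.congr' ?_ (tendsto_const_nhds (x := f z) (f := l))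
    filter_upwards [self_mem_nhdsWithin] with t (ht : (0:ℝ) < t)
    rw [map_smul, smul_eq_mul]
    field_simp
  have tendB : Tendsto (fun t : ℝ => 2 / t ^ 2 * (g (e t) - g xbar - t * f d)) l (𝓝 D) := hD
  have key := (tend0.add tendM).add tendB
  rw [zero_add] at key
  refine key.congr fun t => ?_
  ring
end
end

section
/- Let g : ℝ² → ℝ be defined by g(x₁,x₂) = x₁³, consider the single constraint g(x) ≤ 0, let x̄ = (0,0) and d = (1,0). Then ∇g(x̄) = (0,0), g''(x̄,d) = 0, and the point z = (1,0) satisfies z ∈ B(x̄,d) but z ∉ A(x̄,d); in particular B(x̄,d) is not contained in A(x̄,d). -/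
open Set Filter Topology

noncomputable section

lemma fderiv_cube_zero :
    fderiv ℝ (fun x : Fin 2 → ℝ => (x 0) ^ 3) (0 : Fin 2 → ℝ) = 0 := by
  have h : HasFDerivAt (fun x : Fin 2 → ℝ => (x 0) ^ 3)
      ((3 * (0:ℝ) ^ 2) • (ContinuousLinearMap.proj 0 : (Fin 2 → ℝ) →L[ℝ] ℝ))
      (0 : Fin 2 → ℝ) := by
    have hp : HasDerivAt (fun y : ℝ => y ^ 3) (3 * (0:ℝ) ^ 2) 0 := by
      simpa using hasDerivAt_pow 3 (0 : ℝ)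
    have := hp.comp_hasFDerivAt (0 : Fin 2 → ℝ)
      ((ContinuousLinearMap.proj 0 : (Fin 2 → ℝ) →L[ℝ] ℝ).hasFDerivAt)
    simpa [Function.comp_def] using this
  have := h.fderiv
  simpa using this

/-- for the single constraint `g(x₁,x₂) = x₁³`, `x̄ = (0,0)`, `d = (1,0)`:
`∇g(x̄) = 0`, `g''(x̄,d) = 0`, and `z = (1,0)` lies in `B(x̄,d)` but not in `A(x̄,d)`;
in particular `B(x̄,d)` is not contained in `A(x̄,d)`. -/
theorem statement2 :
    fderiv ℝ (fun x : Fin 2 → ℝ => (x 0) ^ 3) (0 : Fin 2 → ℝ) = 0 ∧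
    HasDirDeriv2 (fun x : Fin 2 → ℝ => (x 0) ^ 3) (0 : Fin 2 → ℝ) ![1, 0] 0 ∧
    (![1, 0] ∈ setB 1 (fun _ (x : Fin 2 → ℝ) => (x 0) ^ 3) 0 ![1, 0] (fun _ => 0) ∧
     ![1, 0] ∉ setA 1 (fun _ (x : Fin 2 → ℝ) => (x 0) ^ 3) 0 ![1, 0]) ∧
    ¬ setB 1 (fun _ (x : Fin 2 → ℝ) => (x 0) ^ 3) 0 ![1, 0] (fun _ => 0) ⊆
        setA 1 (fun _ (x : Fin 2 → ℝ) => (x 0) ^ 3) 0 ![1, 0] := by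
  have hf := fderiv_cube_zero
  have hB : ![1, 0] ∈ setB 1 (fun _ (x : Fin 2 → ℝ) => (x 0) ^ 3) 0 ![1, 0]
      (fun _ => 0) := by
    intro i _ _
    simp [hf]
  have hA : ![1, 0] ∉ setA 1 (fun _ (x : Fin 2 → ℝ) => (x 0) ^ 3) 0 ![1, 0] := by
    intro h
    obtain ⟨δ, hδ, hle⟩ := h 0 (by simp) (by simp [hf])
    have ht : δ / 2 ∈ Ioo (0 : ℝ) δ := ⟨by linarith, by linarith⟩
    have := hle (δ / 2) ht
    have hval : (((0 : Fin 2 → ℝ) + (δ/2) • ![1, 0] + ((δ/2) ^ 2 / 2) • ![1, 0] : Fin 2 → ℝ)) 0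
        = δ/2 + (δ/2) ^ 2 / 2 := by
      simp
    simp only [hval] at this
    have hp : 0 < δ / 2 + (δ / 2) ^ 2 / 2 := by positivity
    have := pow_pos hp 3
    linarith
  refine ⟨hf, ?_, ⟨hB, hA⟩, fun hsub => hA (hsub hB)⟩
  · unfold HasDirDeriv2
    rw [hf]
    have heq : (fun t : ℝ => 2 / t ^ 2 *
        (((((0 : Fin 2 → ℝ) + t • ![1, 0] : Fin 2 → ℝ)) 0) ^ 3 - ((0 : Fin 2 → ℝ) 0) ^ 3 -
          t * (0 : (Fin 2 → ℝ) →L[ℝ] ℝ) ![1, 0])) =ᶠ[𝓝[>] (0:ℝ)]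
        (fun t : ℝ => 2 * t) := by
      filter_upwards [self_mem_nhdsWithin] with t ht
      have ht0 : (t : ℝ) ≠ 0 := ne_of_gt ht
      simp only [Pi.add_apply, Pi.smul_apply, Pi.zero_apply, Matrix.cons_val_zero,
        smul_eq_mul, mul_one, ContinuousLinearMap.zero_apply, mul_zero, sub_zero,
        zero_add]
      field_simp
      ring
    have : Filter.Tendsto (fun t : ℝ => 2 * t) (𝓝[>] (0:ℝ)) (𝓝 0) := by
      have h2 : Continuous (fun t : ℝ => 2 * t) := continuous_const.mul continuous_id
      have := h2.tendsto (0 : ℝ)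
      simpa using this.mono_left nhdsWithin_le_nhds
    exact (Filter.Tendsto.congr' heq.symm this)
end
end

section
/- Let x̄ be a feasible point for problem (VP) and d ∈ ℝ^s a direction. Suppose Conditions (C) hold, and suppose that for every z ∈ ℝ^s and every i ∈ K(x̄,d), the function of one variable φ_i(t) := g_i(x̄ + td + 0.5t²z) is second-order locally pseudoconcave at t = 0 on the right. Then A(x̄,d) = B(x̄,d). -/
open Set Filter Topology Asymptotics

noncomputable section

/-- A function of one variable `φ`, differentiable at `0` with derivative `φ' = φ'(0)` and with
second-order right derivative `D = φ''(0,1)`, is second-order locally pseudoconcave at `t = 0`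
on the right: there is `δ > 0` such that `φ(t) > φ(0)` for some `t ∈ (0,δ)` implies `φ'(0) ≥ 0`,
and `φ(t) > φ(0)` for some `t ∈ (0,δ)` together with `φ'(0) = 0` implies `φ''(0,1) > 0`. -/
def SOLocPseudoconcaveRight (φ : ℝ → ℝ) : Prop :=
  ∃ φ' D : ℝ, HasDerivAt φ φ' 0 ∧
    Filter.Tendsto (fun t : ℝ => 2 / t ^ 2 * (φ t - φ 0 - t * φ')) (𝓝[>] (0 : ℝ)) (𝓝 D) ∧
    ∃ δ > (0 : ℝ), ((∃ t ∈ Ioo (0 : ℝ) δ, φ 0 < φ t) → 0 ≤ φ') ∧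
      ((∃ t ∈ Ioo (0 : ℝ) δ, φ 0 < φ t) → φ' = 0 → 0 < D)

lemma aux_key {s : ℕ} {X : Set (Fin s → ℝ)} (hX : IsOpen X) {G : (Fin s → ℝ) → ℝ}
    {xbar d z : Fin s → ℝ} (hxX : xbar ∈ X) (hG : ContDiffOn ℝ 1 G X)
    (hgd : fderiv ℝ G xbar d = 0) {D : ℝ}
    (hdd : Filter.Tendsto (fun t : ℝ => 2 / t ^ 2 *
      (G (xbar + t • d) - G xbar - t * fderiv ℝ G xbar d)) (𝓝[>] (0:ℝ)) (𝓝 D)) :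
    HasDerivAt (fun t : ℝ => G (xbar + t • d + (t ^ 2 / 2) • z)) 0 0 ∧
    Filter.Tendsto (fun t : ℝ => 2 / t ^ 2 *
      (G (xbar + t • d + (t ^ 2 / 2) • z) - G xbar)) (𝓝[>] (0:ℝ))
      (𝓝 (fderiv ℝ G xbar z + D)) := by
  have hcd : ContDiffAt ℝ 1 G xbar := hG.contDiffAt (hX.mem_nhds hxX)
  have hfd : HasFDerivAt G (fderiv ℝ G xbar) xbar :=
    (hcd.differentiableAt one_ne_zero).hasFDerivAt
  have hc1 : HasDerivAt (fun t : ℝ => t • d) d 0 := by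
    simpa using (hasDerivAt_id (0:ℝ)).smul_const d
  have hc2 : HasDerivAt (fun t : ℝ => (t ^ 2 / 2) • z) 0 0 := by
    have h := ((hasDerivAt_pow 2 (0:ℝ)).div_const 2).smul_const z
    simpa using h
  have hcurve : HasDerivAt (fun t : ℝ => xbar + t • d + (t ^ 2 / 2) • z) d 0 := by
    have h := (hc1.const_add xbar).add hc2
    rw [add_zero] at h; exact h
  have h0 : xbar + (0:ℝ) • d + ((0:ℝ) ^ 2 / 2) • z = xbar := by simp
  have hfd' : HasFDerivAt G (fderiv ℝ G xbar) (xbar + (0:ℝ) • d + ((0:ℝ) ^ 2 / 2) • z) := by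
    rw [h0]; exact hfd
  have hder : HasDerivAt (fun t : ℝ => G (xbar + t • d + (t ^ 2 / 2) • z))
      (fderiv ℝ G xbar d) 0 := hfd'.comp_hasDerivAt 0 hcurve
  refine ⟨by rw [hgd] at hder; exact hder, ?_⟩
  have hstrict : HasStrictFDerivAt G (fderiv ℝ G xbar) xbar :=
    hcd.hasStrictFDerivAt one_ne_zero
  have htendpair : Tendsto (fun t : ℝ => (xbar + t • d + (t ^ 2 / 2) • z, xbar + t • d))
      (𝓝[>] (0:ℝ)) (𝓝 (xbar, xbar)) := by
    apply Tendsto.mono_left _ nhdsWithin_le_nhds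
    have hcont : Continuous fun t : ℝ => (xbar + t • d + (t ^ 2 / 2) • z, xbar + t • d) := by
      fun_prop
    have := hcont.tendsto 0
    simpa using this
  have hiso : (fun p : (Fin s → ℝ) × (Fin s → ℝ) =>
      G p.1 - G p.2 - fderiv ℝ G xbar (p.1 - p.2)) =o[𝓝 (xbar, xbar)] fun p => p.1 - p.2 :=
    hstrict.isLittleO
  have hcomp := hiso.comp_tendsto htendpair
  have hsub : ∀ t : ℝ, (xbar + t • d + (t ^ 2 / 2) • z) - (xbar + t • d) = (t ^ 2 / 2) • z := by
    intro t; abel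
  have hbig : (fun t : ℝ => (t ^ 2 / 2) • z) =O[𝓝[>] (0:ℝ)] fun t : ℝ => t ^ 2 := by
    apply IsBigO.of_bound (‖z‖ / 2)
    filter_upwards with t
    rw [norm_smul, Real.norm_eq_abs, Real.norm_eq_abs,
      abs_of_nonneg (by positivity : (0:ℝ) ≤ t ^ 2 / 2),
      abs_of_nonneg (by positivity : (0:ℝ) ≤ t ^ 2)]
    exact le_of_eq (by ring)
  have hRlo : (fun t : ℝ => G (xbar + t • d + (t ^ 2 / 2) • z) - G (xbar + t • d)
      - fderiv ℝ G xbar ((t ^ 2 / 2) • z)) =o[𝓝[>] (0:ℝ)] fun t : ℝ => t ^ 2 := by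
    refine IsLittleO.trans_isBigO ?_ hbig
    have : ∀ t : ℝ, G (xbar + t • d + (t ^ 2 / 2) • z) - G (xbar + t • d)
        - fderiv ℝ G xbar ((t ^ 2 / 2) • z)
        = ((fun p : (Fin s → ℝ) × (Fin s → ℝ) =>
            G p.1 - G p.2 - fderiv ℝ G xbar (p.1 - p.2)) ∘
          (fun t : ℝ => (xbar + t • d + (t ^ 2 / 2) • z, xbar + t • d))) t := by
      intro t; simp [Function.comp, hsub]
    refine (hcomp.congr' (Eventually.of_forall fun t => (this t).symm) ?_).trans_isBigO
      (isBigO_refl _ _)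
    filter_upwards with t
    simp [Function.comp, hsub]
  have hdiv : Tendsto (fun t : ℝ => (G (xbar + t • d + (t ^ 2 / 2) • z) - G (xbar + t • d)
      - fderiv ℝ G xbar ((t ^ 2 / 2) • z)) / t ^ 2) (𝓝[>] (0:ℝ)) (𝓝 0) :=
    hRlo.tendsto_div_nhds_zero
  have hcomb : Tendsto (fun t : ℝ =>
      2 * ((G (xbar + t • d + (t ^ 2 / 2) • z) - G (xbar + t • d)
        - fderiv ℝ G xbar ((t ^ 2 / 2) • z)) / t ^ 2)
      + 2 / t ^ 2 * (G (xbar + t • d) - G xbar - t * fderiv ℝ G xbar d)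
      + fderiv ℝ G xbar z) (𝓝[>] (0:ℝ)) (𝓝 (2 * 0 + D + fderiv ℝ G xbar z)) :=
    ((hdiv.const_mul 2).add hdd).add_const _
  have heq : 2 * 0 + D + fderiv ℝ G xbar z = fderiv ℝ G xbar z + D := by ring
  rw [heq] at hcomb
  refine hcomb.congr' ?_
  filter_upwards [self_mem_nhdsWithin] with t ht
  have ht0 : (t:ℝ) ≠ 0 := ne_of_gt ht
  have hmap : fderiv ℝ G xbar ((t ^ 2 / 2) • z) = (t ^ 2 / 2) * fderiv ℝ G xbar z := by
    rw [map_smul]; rfl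
  rw [hmap, hgd]
  field_simp
  ring


/-- under Conditions (C), if for every `z` and every `i ∈ K(x̄,d)` the function
`φ_i(t) = g_i(x̄ + td + 0.5 t² z)` is second-order locally pseudoconcave at `t = 0` on the
right, then `A(x̄,d) = B(x̄,d)`. -/
theorem statement3 {s n m : ℕ} (X : Set (Fin s → ℝ)) (hX : IsOpen X)
    (f : Fin n → (Fin s → ℝ) → ℝ) (g : Fin m → (Fin s → ℝ) → ℝ)
    (xbar d : Fin s → ℝ) (hxX : xbar ∈ X) (hfeas : ∀ i, g i xbar ≤ 0)
    -- Conditions (C):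
    (hCont : ∀ i, g i xbar ≠ 0 → ContinuousAt (g i) xbar)
    (hfC1 : ∀ j, ContDiffOn ℝ 1 (f j) X)
    (hgC1 : ∀ i, g i xbar = 0 → ContDiffOn ℝ 1 (g i) X)
    (fdd : Fin n → ℝ) (gdd : Fin m → ℝ)
    (hfdd : ∀ j, fderiv ℝ (f j) xbar d = 0 → HasDirDeriv2 (f j) xbar d (fdd j))
    (hgdd : ∀ i, g i xbar = 0 → fderiv ℝ (g i) xbar d = 0 →
      HasDirDeriv2 (g i) xbar d (gdd i))
    -- second-order local pseudoconcavity of the φ_i: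
    (hpc : ∀ z : Fin s → ℝ, ∀ i, g i xbar = 0 → fderiv ℝ (g i) xbar d = 0 →
      SOLocPseudoconcaveRight (fun t : ℝ => g i (xbar + t • d + (t ^ 2 / 2) • z))) :
    setA m g xbar d = setB m g xbar d gdd := by
  ext z
  simp only [setA, setB, mem_setOf_eq]
  constructor
  · intro hz i hg0 hgd
    obtain ⟨hder, hlim⟩ := aux_key (z := z) hX hxX (hgC1 i hg0) hgd (hgdd i hg0 hgd)
    obtain ⟨δ, hδ, hA⟩ := hz i hg0 hgd
    refine le_of_tendsto hlim ?_
    filter_upwards [Ioo_mem_nhdsGT_of_mem (⟨le_rfl, hδ⟩ : (0:ℝ) ∈ Ico 0 δ)] with t ht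
    have h1 := hA t ht
    have ht2 : (0:ℝ) ≤ 2 / t ^ 2 := by positivity
    nlinarith [hg0]
  · intro hz i hg0 hgd
    obtain ⟨hder, hlim⟩ := aux_key (z := z) hX hxX (hgC1 i hg0) hgd (hgdd i hg0 hgd)
    have hD := hz i hg0 hgd
    obtain ⟨φ', Dpc, hφder, hφlim, δ, hδ, H1, H2⟩ := hpc z i hg0 hgd
    have hφ'0 : φ' = 0 := hφder.unique hder
    have hlim' : Filter.Tendsto (fun t : ℝ => 2 / t ^ 2 *
        (g i (xbar + t • d + (t ^ 2 / 2) • z))) (𝓝[>] (0:ℝ))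
        (𝓝 (fderiv ℝ (g i) xbar z + gdd i)) := by
      simpa [hg0] using hlim
    have hφlim' : Filter.Tendsto (fun t : ℝ => 2 / t ^ 2 *
        (g i (xbar + t • d + (t ^ 2 / 2) • z))) (𝓝[>] (0:ℝ)) (𝓝 Dpc) := by
      simpa [hφ'0, hg0] using hφlim
    have hDeq : Dpc = fderiv ℝ (g i) xbar z + gdd i := tendsto_nhds_unique hφlim' hlim'
    refine ⟨δ, hδ, fun t ht => ?_⟩
    by_contra hgt
    push_neg at hgt
    have hex : ∃ t ∈ Ioo (0:ℝ) δ,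
        (fun t : ℝ => g i (xbar + t • d + (t ^ 2 / 2) • z)) 0 <
        (fun t : ℝ => g i (xbar + t • d + (t ^ 2 / 2) • z)) t :=
      ⟨t, ht, by simpa [hg0] using hgt⟩
    have hpos := H2 hex hφ'0
    rw [hDeq] at hpos
    linarith
end
end

section
/- (Primal second-order necessary conditions.) Let x̄ be a weak local Pareto minimizer of problem (VP) and let d be a critical direction at x̄. Suppose Conditions (C) are satisfied and that the second-order Zangwill constraint qualification cl(A(x̄,d)) = B(x̄,d) holds. Then there is no vector z ∈ ℝ^s such that ∇f_j(x̄)z + f_j''(x̄,d) < 0 for all j ∈ J(x̄,d) and ∇g_i(x̄)z + g_i''(x̄,d) ≤ 0 for all i ∈ K(x̄,d). -/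
open Set Filter Topology

noncomputable section

lemma lemA {φ : ℝ → ℝ} {D : ℝ} (hD : D < 0) (hφ : HasDerivAt φ D 0) :
    ∀ᶠ t in 𝓝[>] (0:ℝ), φ t < φ 0 := by
  have hslope := hasDerivAt_iff_tendsto_slope.1 hφ
  have hle : 𝓝[>] (0:ℝ) ≤ 𝓝[≠] (0:ℝ) :=
    nhdsWithin_mono _ (fun t ht => ne_of_gt ht)
  have h1 : ∀ᶠ t in 𝓝[>] (0:ℝ), slope φ 0 t < 0 :=
    (hslope.mono_left hle).eventually (Filter.Tendsto.eventually_lt_const hD tendsto_id)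
  filter_upwards [h1, self_mem_nhdsWithin] with t ht ht0
  have hs : (φ t - φ 0) / t < 0 := by simpa [slope_def_field] using ht
  have htpos : (0:ℝ) < t := ht0
  have := mul_neg_of_neg_of_pos hs htpos
  rw [div_mul_cancel₀ _ (ne_of_gt htpos)] at this
  linarith

lemma lemB {φ : ℝ → ℝ} {D : ℝ}
    (hD : D < 0)
    (hφ : Tendsto (fun t : ℝ => 2 / t ^ 2 * (φ t - φ 0)) (𝓝[>] (0:ℝ)) (𝓝 D)) :
    ∀ᶠ t in 𝓝[>] (0:ℝ), φ t < φ 0 := by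
  have h1 : ∀ᶠ t in 𝓝[>] (0:ℝ), 2 / t ^ 2 * (φ t - φ 0) < 0 :=
    hφ.eventually (Filter.Tendsto.eventually_lt_const hD tendsto_id)
  filter_upwards [h1, self_mem_nhdsWithin] with t ht ht0
  have htpos : (0:ℝ) < t := ht0
  have hpos : (0:ℝ) < 2 / t ^ 2 := by positivity
  rcases mul_neg_iff.1 ht with ⟨_, h2⟩ | ⟨h1', _⟩
  · linarith
  · linarith

lemma tendsto_second {s : ℕ} {φ : (Fin s → ℝ) → ℝ} {xbar d z : Fin s → ℝ} {D : ℝ}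
    (hstrict : HasStrictFDerivAt φ (fderiv ℝ φ xbar) xbar)
    (hLd : fderiv ℝ φ xbar d = 0)
    (hD : HasDirDeriv2 φ xbar d D) :
    Tendsto (fun t : ℝ => 2 / t ^ 2 * (φ (xbar + t • d + (t ^ 2 / 2) • z) - φ xbar))
      (𝓝[>] (0:ℝ)) (𝓝 (fderiv ℝ φ xbar z + D)) := by
  set L := fderiv ℝ φ xbar with hL
  set c : ℝ → (Fin s → ℝ) := fun t => xbar + t • d + (t ^ 2 / 2) • z with hc
  set b : ℝ → (Fin s → ℝ) := fun t => xbar + t • d with hb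
  set u : ℝ → ℝ := fun t => φ (c t) - φ (b t) - L ((t ^ 2 / 2) • z) with hu
  have hcb : Tendsto (fun t : ℝ => (c t, b t)) (𝓝[>] (0:ℝ)) (𝓝 (xbar, xbar)) := by
    have h1 : Tendsto c (𝓝 (0:ℝ)) (𝓝 xbar) := by
      have : Continuous c := by fun_prop
      have := this.tendsto 0
      simpa [hc] using this
    have h2 : Tendsto b (𝓝 (0:ℝ)) (𝓝 xbar) := by
      have : Continuous b := by fun_prop
      have := this.tendsto 0
      simpa [hb] using this
    exact ((h1.prodMk_nhds h2).mono_left nhdsWithin_le_nhds)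
  have hlo : (fun t : ℝ => u t) =o[𝓝[>] (0:ℝ)] (fun t : ℝ => t ^ 2) := by
    have h1 := hstrict.isLittleO.comp_tendsto hcb
    have h2 : (fun t : ℝ => c t - b t) =O[𝓝[>] (0:ℝ)] (fun t : ℝ => t ^ 2) := by
      apply Asymptotics.IsBigO.of_bound (‖z‖ / 2)
      filter_upwards [self_mem_nhdsWithin] with t (ht : (0:ℝ) < t)
      have : c t - b t = (t ^ 2 / 2) • z := by simp [hc, hb]
      rw [this, norm_smul]
      simp [abs_of_pos (by positivity : (0:ℝ) < t ^ 2 / 2), abs_of_pos (by positivity : (0:ℝ) < t ^ 2)]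
      ring_nf
      nlinarith [norm_nonneg z, sq_nonneg t]
    have h3 : (fun t : ℝ => φ (c t) - φ (b t) - L (c t - b t)) =o[𝓝[>] (0:ℝ)]
        (fun t : ℝ => t ^ 2) := h1.trans_isBigO h2
    refine h3.congr' ?_ (EventuallyEq.refl _ _)
    filter_upwards [self_mem_nhdsWithin] with t _
    have : c t - b t = (t ^ 2 / 2) • z := by simp [hc, hb]
    rw [hu, this]
  have t1 : Tendsto (fun t : ℝ => u t / t ^ 2) (𝓝[>] (0:ℝ)) (𝓝 0) :=
    hlo.tendsto_div_nhds_zero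
  have t2 : Tendsto (fun t : ℝ => 2 / t ^ 2 * (φ (b t) - φ xbar)) (𝓝[>] (0:ℝ)) (𝓝 D) := by
    have := hD
    unfold HasDirDeriv2 at this
    rw [← hL, hLd] at this
    simpa [hb] using this
  have comb : Tendsto (fun t : ℝ => 2 * (u t / t ^ 2) + 2 / t ^ 2 * (φ (b t) - φ xbar) + L z)
      (𝓝[>] (0:ℝ)) (𝓝 (2 * 0 + D + L z)) :=
    (((t1.const_mul 2).add t2).add tendsto_const_nhds)
  have heq : ∀ᶠ t in 𝓝[>] (0:ℝ),
      2 * (u t / t ^ 2) + 2 / t ^ 2 * (φ (b t) - φ xbar) + L z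
        = 2 / t ^ 2 * (φ (c t) - φ xbar) := by
    filter_upwards [self_mem_nhdsWithin] with t (ht : (0:ℝ) < t)
    have ht2 : (t : ℝ) ^ 2 ≠ 0 := by positivity
    have hmap : L ((t ^ 2 / 2) • z) = (t ^ 2 / 2) * L z := by
      rw [map_smul]; rfl
    rw [hu]; beta_reduce; rw [hmap]
    field_simp
    ring
  have := comb.congr' heq
  have hlim : (2 * 0 + D + L z) = L z + D := by ring
  rw [hlim] at this
  simpa [hc] using this

/-- primal second-order necessary conditions: if `x̄` is a weak local Pareto
minimizer of (VP), `d` is a critical direction, Conditions (C) hold, and the second-order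
Zangwill constraint qualification `cl(A(x̄,d)) = B(x̄,d)` holds, then there is no `z` with
`∇f_j(x̄)z + f_j''(x̄,d) < 0` for all `j ∈ J(x̄,d)` and
`∇g_i(x̄)z + g_i''(x̄,d) ≤ 0` for all `i ∈ K(x̄,d)`. -/
theorem statement5 {s n m : ℕ} (X : Set (Fin s → ℝ)) (hX : IsOpen X)
    (f : Fin n → (Fin s → ℝ) → ℝ) (g : Fin m → (Fin s → ℝ) → ℝ)
    (xbar d : Fin s → ℝ) (hxX : xbar ∈ X) (hfeas : ∀ i, g i xbar ≤ 0)
    -- weak local Pareto minimizer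
    (hmin : ∃ U ∈ 𝓝 xbar, ∀ y ∈ U, y ∈ X → (∀ i, g i y ≤ 0) → ¬ ∀ j, f j y < f j xbar)
    -- d is a critical direction
    (hcritf : ∀ j, fderiv ℝ (f j) xbar d ≤ 0)
    (hcritg : ∀ i, g i xbar = 0 → fderiv ℝ (g i) xbar d ≤ 0)
    -- Conditions (C)
    (hCont : ∀ i, g i xbar ≠ 0 → ContinuousAt (g i) xbar)
    (hfC1 : ∀ j, ContDiffOn ℝ 1 (f j) X)
    (hgC1 : ∀ i, g i xbar = 0 → ContDiffOn ℝ 1 (g i) X)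
    (fdd : Fin n → ℝ) (gdd : Fin m → ℝ)
    (hfdd : ∀ j, fderiv ℝ (f j) xbar d = 0 → HasDirDeriv2 (f j) xbar d (fdd j))
    (hgdd : ∀ i, g i xbar = 0 → fderiv ℝ (g i) xbar d = 0 →
      HasDirDeriv2 (g i) xbar d (gdd i))
    -- second-order Zangwill constraint qualification
    (hCQ : closure (setA m g xbar d) = setB m g xbar d gdd) :
    ¬ ∃ z : Fin s → ℝ,
      (∀ j, fderiv ℝ (f j) xbar d = 0 → fderiv ℝ (f j) xbar z + fdd j < 0) ∧
      (∀ i, g i xbar = 0 → fderiv ℝ (g i) xbar d = 0 →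
        fderiv ℝ (g i) xbar z + gdd i ≤ 0) := by
  rintro ⟨z, hz1, hz2⟩
  -- z ∈ B = closure A
  have hzB : z ∈ setB m g xbar d gdd := fun i hi hdi => hz2 i hi hdi
  rw [← hCQ] at hzB
  -- the open set of points satisfying the strict inequalities for J
  set Uo : Set (Fin s → ℝ) :=
    {w | ∀ j, fderiv ℝ (f j) xbar d = 0 → fderiv ℝ (f j) xbar w + fdd j < 0} with hUo
  have hUo_open : IsOpen Uo := by
    have heq : Uo = ⋂ j, {w | fderiv ℝ (f j) xbar d = 0 →
        fderiv ℝ (f j) xbar w + fdd j < 0} := by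
      ext w; simp [hUo, mem_iInter]
    rw [heq]
    apply isOpen_iInter_of_finite
    intro j
    by_cases hj : fderiv ℝ (f j) xbar d = 0
    · have h2 : {w | fderiv ℝ (f j) xbar d = 0 → fderiv ℝ (f j) xbar w + fdd j < 0}
          = {w | fderiv ℝ (f j) xbar w + fdd j < 0} := by
        ext w; simp [hj]
      rw [h2]
      exact isOpen_lt ((fderiv ℝ (f j) xbar).continuous.add continuous_const)
        continuous_const
    · have h2 : {w | fderiv ℝ (f j) xbar d = 0 → fderiv ℝ (f j) xbar w + fdd j < 0}
          = univ := by
        ext w; simp [hj]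
      rw [h2]; exact isOpen_univ
  have hzUo : z ∈ Uo := fun j hj => hz1 j hj
  obtain ⟨z', hz'Uo, hz'A⟩ :=
    mem_closure_iff.1 hzB Uo hUo_open hzUo
  -- the parabolic curve
  set c : ℝ → (Fin s → ℝ) := fun t => xbar + t • d + (t ^ 2 / 2) • z' with hcdef
  have hc0 : c 0 = xbar := by simp [hcdef]
  have hcderiv : HasDerivAt c d 0 := by
    have h1 : HasDerivAt (fun t : ℝ => t • d) ((1:ℝ) • d) 0 := (hasDerivAt_id 0).smul_const d
    have h2 : HasDerivAt (fun t : ℝ => (t ^ 2 / 2) • z')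
        (((2:ℕ) * (0:ℝ) ^ (2-1) / 2) • z') 0 :=
      ((hasDerivAt_pow 2 (0:ℝ)).div_const 2).smul_const z'
    have h3 := (h1.add h2).const_add xbar
    simpa [hcdef, add_assoc] using h3
  have hctend : Tendsto c (𝓝[>] (0:ℝ)) (𝓝 xbar) := by
    have hcont : Continuous c := by fun_prop
    have h5 : Tendsto c (𝓝[>] (0:ℝ)) (𝓝 (c 0)) :=
      (hcont.tendsto 0).mono_left nhdsWithin_le_nhds
    rwa [hc0] at h5
  obtain ⟨U, hU, hUmin⟩ := hmin
  have e1 : ∀ᶠ t in 𝓝[>] (0:ℝ), c t ∈ U := hctend hU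
  have e2 : ∀ᶠ t in 𝓝[>] (0:ℝ), c t ∈ X := hctend (hX.mem_nhds hxX)
  have e3 : ∀ i, ∀ᶠ t in 𝓝[>] (0:ℝ), g i (c t) ≤ 0 := by
    intro i
    by_cases hi : g i xbar = 0
    · rcases lt_or_eq_of_le (hcritg i hi) with hlt | heq
      · -- negative first derivative along d
        have hdiff : HasFDerivAt (g i) (fderiv ℝ (g i) xbar) xbar :=
          (((hgC1 i hi).contDiffAt (hX.mem_nhds hxX)).differentiableAt one_ne_zero).hasFDerivAt
        have hdiff' : HasFDerivAt (g i) (fderiv ℝ (g i) xbar) (c 0) := by rwa [hc0]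
        have hcomp : HasDerivAt (fun t => g i (c t)) (fderiv ℝ (g i) xbar d) 0 :=
          hdiff'.comp_hasDerivAt 0 hcderiv
        have hev := lemA hlt hcomp
        filter_upwards [hev] with t ht
        rw [hc0, hi] at ht
        exact le_of_lt ht
      · -- i ∈ K : use z' ∈ A
        obtain ⟨δ, hδ, hAll⟩ := hz'A i hi heq
        have hmem : Ioo (0:ℝ) δ ∈ 𝓝[>] (0:ℝ) := Ioo_mem_nhdsGT_of_mem ⟨le_refl 0, hδ⟩
        filter_upwards [hmem] with t ht
        exact hAll t ht
    · -- inactive constraint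
      have hneg : g i xbar < 0 := lt_of_le_of_ne (hfeas i) hi
      have htend : Tendsto (fun t => g i (c t)) (𝓝[>] (0:ℝ)) (𝓝 (g i xbar)) :=
        (hCont i hi).tendsto.comp hctend
      have hev : ∀ᶠ t in 𝓝[>] (0:ℝ), g i (c t) < 0 :=
        htend.eventually (Filter.Tendsto.eventually_lt_const hneg tendsto_id)
      filter_upwards [hev] with t ht using le_of_lt ht
  have e4 : ∀ j, ∀ᶠ t in 𝓝[>] (0:ℝ), f j (c t) < f j xbar := by
    intro j
    rcases lt_or_eq_of_le (hcritf j) with hlt | heq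
    · have hdiff : HasFDerivAt (f j) (fderiv ℝ (f j) xbar) xbar :=
        (((hfC1 j).contDiffAt (hX.mem_nhds hxX)).differentiableAt one_ne_zero).hasFDerivAt
      have hdiff' : HasFDerivAt (f j) (fderiv ℝ (f j) xbar) (c 0) := by rwa [hc0]
      have hcomp : HasDerivAt (fun t => f j (c t)) (fderiv ℝ (f j) xbar d) 0 :=
        hdiff'.comp_hasDerivAt 0 hcderiv
      have hev := lemA hlt hcomp
      filter_upwards [hev] with t ht
      rwa [hc0] at ht
    · have hd0 : fderiv ℝ (f j) xbar d = 0 := heq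
      have hstrict : HasStrictFDerivAt (f j) (fderiv ℝ (f j) xbar) xbar :=
        ((hfC1 j).contDiffAt (hX.mem_nhds hxX)).hasStrictFDerivAt one_ne_zero
      have htt := tendsto_second (z := z') hstrict hd0 (hfdd j hd0)
      have hneg : fderiv ℝ (f j) xbar z' + fdd j < 0 := hz'Uo j hd0
      have htt' : Tendsto (fun t : ℝ => 2 / t ^ 2 * ((fun t => f j (c t)) t -
          (fun t => f j (c t)) 0)) (𝓝[>] (0:ℝ)) (𝓝 (fderiv ℝ (f j) xbar z' + fdd j)) := by
        simpa [hcdef, hc0] using htt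
      have hev := lemB hneg htt'
      filter_upwards [hev] with t ht
      rwa [hc0] at ht
  have eall := ((e1.and e2).and ((eventually_all.2 e3).and (eventually_all.2 e4)))
  obtain ⟨t, ⟨⟨htU, htX⟩, htg, htf⟩⟩ := eall.exists
  exact hUmin (c t) htU htX htg htf
end
end

section
/- Let X ⊆ ℝ^s be open, f : X → ℝ continuously differentiable, x̄ ∈ X, and d, z ∈ ℝ^s. Suppose ∇f(x̄)d = 0, the second-order directional derivative f''(x̄,d) exists, and ∇f(x̄)z + f''(x̄,d) < 0. Then there exists ε > 0 such that f(x̄ + td + 0.5t²z) < f(x̄) for all t ∈ (0,ε). -/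
open Set Filter Topology

noncomputable section

set_option maxHeartbeats 1000000 in
/-- if `f` is continuously differentiable on the open set `X`, `x̄ ∈ X`,
`∇f(x̄)d = 0`, `f''(x̄,d)` exists, and `∇f(x̄)z + f''(x̄,d) < 0`, then there is `ε > 0` with
`f(x̄ + td + 0.5 t² z) < f(x̄)` for all `t ∈ (0,ε)`. -/
theorem statement7 {s : ℕ} (X : Set (Fin s → ℝ)) (hX : IsOpen X)
    (f : (Fin s → ℝ) → ℝ) (hf : ContDiffOn ℝ 1 f X)
    (xbar d z : Fin s → ℝ) (hxX : xbar ∈ X)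
    (hgrad : fderiv ℝ f xbar d = 0)
    (D : ℝ) (hD : HasDirDeriv2 f xbar d D)
    (hneg : fderiv ℝ f xbar z + D < 0) :
    ∃ ε > 0, ∀ t ∈ Ioo (0 : ℝ) ε, f (xbar + t • d + (t ^ 2 / 2) • z) < f xbar := by
  rw [HasDirDeriv2] at hD
  set L := fderiv ℝ f xbar with hL
  -- continuity of derivative at xbar
  have hcont : ContinuousAt (fderiv ℝ f) xbar :=
    (hf.continuousOn_fderiv_of_isOpen hX le_rfl).continuousAt (hX.mem_nhds hxX)
  obtain ⟨δ₀, hδ₀, hball⟩ := Metric.isOpen_iff.1 hX xbar hxX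
  -- φ : second part
  have hφ : Tendsto (fun t : ℝ => 2 / t ^ 2 * (f (xbar + t • d) - f xbar)) (𝓝[>] 0) (𝓝 D) := by
    refine hD.congr fun t => ?_
    rw [hgrad]; ring
  -- ψ : first part
  have hψ : Tendsto (fun t : ℝ =>
      2 / t ^ 2 * (f (xbar + t • d + (t ^ 2 / 2) • z) - f (xbar + t • d))) (𝓝[>] 0) (𝓝 (L z)) := by
    rw [Metric.tendsto_nhdsWithin_nhds]
    intro ε hε
    have hε' : 0 < ε / (2 * (‖z‖ + 1)) := by positivity
    obtain ⟨δ₂, hδ₂, hδ₂'⟩ := Metric.continuousAt_iff.1 hcont _ hε'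
    set δ₁ := min δ₀ δ₂ with hδ₁def
    have hδ₁ : 0 < δ₁ := lt_min hδ₀ hδ₂
    refine ⟨min 1 (δ₁ / (‖d‖ + ‖z‖ + 1)), by positivity, fun t ht htd => ?_⟩
    have ht0 : 0 < t := ht
    have ht1 : t < 1 := lt_of_le_of_lt (le_abs_self t) (lt_of_lt_of_le (by simpa using htd) (min_le_left _ _))
    have ht2 : t < δ₁ / (‖d‖ + ‖z‖ + 1) :=
      lt_of_le_of_lt (le_abs_self t) (lt_of_lt_of_le (by simpa using htd) (min_le_right _ _))
    set a := xbar + t • d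
    set b := xbar + t • d + (t ^ 2 / 2) • z
    have hkey : t * ‖d‖ + t ^ 2 / 2 * ‖z‖ < δ₁ := by
      have h1 : t ^ 2 / 2 ≤ t := by nlinarith
      have h2 : t * (‖d‖ + ‖z‖ + 1) < δ₁ := by
        rw [← lt_div_iff₀ (by positivity)]; exact ht2
      nlinarith [norm_nonneg z, norm_nonneg d]
    have haball : a ∈ Metric.ball xbar δ₁ := by
      simp only [a, Metric.mem_ball, dist_eq_norm, add_sub_cancel_left]
      calc ‖t • d‖ = t * ‖d‖ := by rw [norm_smul, Real.norm_of_nonneg ht0.le]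
        _ < δ₁ := by nlinarith [norm_nonneg z]
    have hbball : b ∈ Metric.ball xbar δ₁ := by
      simp only [b, Metric.mem_ball, dist_eq_norm, add_assoc, add_sub_cancel_left]
      calc ‖t • d + (t ^ 2 / 2) • z‖ ≤ ‖t • d‖ + ‖(t ^ 2 / 2) • z‖ := norm_add_le _ _
        _ = t * ‖d‖ + t ^ 2 / 2 * ‖z‖ := by
            rw [norm_smul, norm_smul, Real.norm_of_nonneg ht0.le,
              Real.norm_of_nonneg (by positivity : (0:ℝ) ≤ t ^ 2 / 2)]
        _ < δ₁ := hkey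
    have hsubX : Metric.ball xbar δ₁ ⊆ X := fun y hy =>
      hball (Metric.ball_subset_ball (min_le_left _ _) hy)
    have hdiff : ∀ y ∈ Metric.ball xbar δ₁, DifferentiableAt ℝ f y := fun y hy =>
      ((hf.differentiableOn one_ne_zero).differentiableAt (hX.mem_nhds (hsubX hy)))
    have hbound : ∀ y ∈ Metric.ball xbar δ₁, ‖fderiv ℝ f y - L‖ ≤ ε / (2 * (‖z‖ + 1)) := by
      intro y hy
      have := hδ₂' (show dist y xbar < δ₂ from lt_of_lt_of_le hy (min_le_right _ _))
      rw [dist_eq_norm] at this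
      exact this.le
    have hmvt := (convex_ball xbar δ₁).norm_image_sub_le_of_norm_fderiv_le' hdiff hbound haball hbball
    have hba : b - a = (t ^ 2 / 2) • z := by simp [a, b, add_assoc]
    rw [hba, map_smul, norm_smul, Real.norm_of_nonneg (by positivity : (0:ℝ) ≤ t ^ 2 / 2),
      smul_eq_mul] at hmvt
    have ht2ne : t ^ 2 ≠ 0 := by positivity
    rw [Real.dist_eq]
    have heq : 2 / t ^ 2 * (f b - f a) - L z
        = 2 / t ^ 2 * (f b - f a - t ^ 2 / 2 * L z) := by
      field_simp
    rw [heq, abs_mul, abs_of_pos (by positivity : (0:ℝ) < 2 / t ^ 2)]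
    calc 2 / t ^ 2 * |f b - f a - t ^ 2 / 2 * L z|
        ≤ 2 / t ^ 2 * (ε / (2 * (‖z‖ + 1)) * (t ^ 2 / 2 * ‖z‖)) := by
          apply mul_le_mul_of_nonneg_left _ (by positivity)
          rw [← Real.norm_eq_abs]
          exact hmvt
      _ = ε * (‖z‖ / (2 * (‖z‖ + 1))) := by field_simp
      _ < ε := by
          have : ‖z‖ / (2 * (‖z‖ + 1)) < 1 := by
            rw [div_lt_one (by positivity)]; linarith [norm_nonneg z]
          nlinarith
  -- combine
  have hsum : Tendsto (fun t : ℝ =>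
      2 / t ^ 2 * (f (xbar + t • d + (t ^ 2 / 2) • z) - f xbar)) (𝓝[>] 0) (𝓝 (L z + D)) := by
    refine (hψ.add hφ).congr fun t => ?_
    ring
  have hev : ∀ᶠ t in 𝓝[>] (0:ℝ),
      2 / t ^ 2 * (f (xbar + t • d + (t ^ 2 / 2) • z) - f xbar) < 0 :=
    hsum.eventually_lt_const hneg
  obtain ⟨u, hu, hsub⟩ := mem_nhdsGT_iff_exists_Ioo_subset.1 hev
  refine ⟨u, hu, fun t ht => ?_⟩
  have h1 := hsub ht
  simp only [mem_setOf_eq] at h1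
  have ht0 : 0 < t := ht.1
  have ht2 : 0 < 2 / t ^ 2 := div_pos two_pos (pow_pos ht0 2)
  nlinarith [h1]
end
end

section
/- Let x̄ be a feasible point of problem (VP) and d a nonzero critical direction at x̄. Suppose f_j, j = 1,…,n, and g_i, i ∈ I(x̄), are Fréchet differentiable at x̄ and that all the second-order directional derivatives f_j''(x̄,d), j = 1,…,n, and g_i''(x̄,d), i ∈ I(x̄), exist. Then the following are equivalent: (a) there exist Lagrange multipliers λ ∈ ℝⁿ, μ ∈ ℝ^m with λ ≥ 0 componentwise and λ ≠ 0, μ ≥ 0 componentwise, such that μ_i g_i(x̄) = 0 for i = 1,…,m, Σ_{j=1}^n λ_j ∇f_j(x̄) + Σ_{i=1}^m μ_i ∇g_i(x̄) = 0, and Σ_{j=1}^n λ_j f_j''(x̄,d) + Σ_{i ∈ I(x̄)} μ_i g_i''(x̄,d) ≥ 0; (b) neither of the following two systems has a solution: System 1 (unknowns u ∈ ℝ^s, v ∈ ℝ): ∇f_j(x̄)u + v f_j''(x̄,d) < 0 for all j = 1,…,n, ∇g_i(x̄)u + v g_i''(x̄,d) ≤ 0 for all i ∈ I(x̄), v > 0;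 System 2 (unknown u ∈ ℝ^s): ∇f_j(x̄)u < 0 for all j = 1,…,n and ∇g_i(x̄)u ≤ 0 for all i ∈ I(x̄). -/
open Set Filter Topology
open scoped Classical

noncomputable section

variable {E : Type*} [NormedAddCommGroup E] [NormedSpace ℝ E]

/-- The conical hull of finitely many vectors. -/
def coneSet {k : ℕ} (w : Fin k → E) : Set E :=
  {x | ∃ μ : Fin k → ℝ, (∀ i, 0 ≤ μ i) ∧ ∑ i, μ i • w i = x}

lemma zero_mem_coneSet {k : ℕ} (w : Fin k → E) : (0 : E) ∈ coneSet w :=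
  ⟨0, fun _ => le_refl 0, by simp⟩

lemma gen_mem_coneSet {k : ℕ} (w : Fin k → E) (i : Fin k) : w i ∈ coneSet w := by
  refine ⟨fun j => if j = i then 1 else 0, fun j => by positivity, ?_⟩
  simp [ite_smul]

lemma smul_mem_coneSet {k : ℕ} (w : Fin k → E) {t : ℝ} (ht : 0 ≤ t) {x : E}
    (hx : x ∈ coneSet w) : t • x ∈ coneSet w := by
  obtain ⟨μ, hμ, hsum⟩ := hx
  exact ⟨fun i => t * μ i, fun i => mul_nonneg ht (hμ i), by
    simp only [mul_smul, ← Finset.smul_sum, hsum]⟩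

lemma convex_coneSet {k : ℕ} (w : Fin k → E) : Convex ℝ (coneSet w) := by
  rintro x ⟨μ, hμ, hx⟩ y ⟨ν, hν, hy⟩ a b ha hb _
  refine ⟨fun i => a * μ i + b * ν i,
    fun i => add_nonneg (mul_nonneg ha (hμ i)) (mul_nonneg hb (hν i)), ?_⟩
  simp only [add_smul, mul_smul, Finset.sum_add_distrib, ← Finset.smul_sum, hx, hy]

lemma isClosed_coneSet [FiniteDimensional ℝ E] : ∀ {k : ℕ} (w : Fin k → E),
    IsClosed (coneSet w) := by
  intro k
  induction k with
  | zero =>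
    intro w
    have : coneSet w = {0} := by
      ext x
      simp only [coneSet, Set.mem_setOf_eq, Set.mem_singleton_iff]
      constructor
      · rintro ⟨μ, _, h⟩; simpa using h.symm
      · rintro rfl; exact ⟨0, fun i => le_refl 0, by simp⟩
    rw [this]; exact isClosed_singleton
  | succ k ih =>
    intro w
    by_cases hli : LinearIndependent ℝ w
    · -- image of the closed orthant under a closed embedding
      set T : (Fin (k + 1) → ℝ) →ₗ[ℝ] E := Fintype.linearCombination ℝ w with hT
      have hker : LinearMap.ker T = ⊥ := by
        rw [LinearMap.ker_eq_bot']
        intro μ hμ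
        have := Fintype.linearIndependent_iff.mp hli μ (by
          simpa [hT, Fintype.linearCombination_apply] using hμ)
        funext i; exact this i
      have hemb := LinearMap.isClosedEmbedding_of_injective (f := T) hker
      have horth : IsClosed {μ : Fin (k + 1) → ℝ | ∀ i, 0 ≤ μ i} := by
        have : {μ : Fin (k + 1) → ℝ | ∀ i, 0 ≤ μ i} =
            Set.pi Set.univ (fun _ => Set.Ici (0 : ℝ)) := by
          ext μ; simp [Set.mem_pi, Set.mem_Ici, Pi.le_def]
        rw [this]
        exact isClosed_set_pi fun i _ => isClosed_Ici
      have himg : coneSet w = T '' {μ | ∀ i, 0 ≤ μ i} := by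
        ext x
        simp only [coneSet, Set.mem_setOf_eq, Set.mem_image, hT,
          Fintype.linearCombination_apply]
      rw [himg]
      exact hemb.isClosedMap _ horth
    · -- reduce to cones with one fewer generator
      obtain ⟨c, hc0, i₁, hci⟩ := Fintype.not_linearIndependent_iff.mp hli
      -- replace c by one with a positive entry
      have key : ∀ c : Fin (k + 1) → ℝ, (∑ i, c i • w i = 0) → (∃ i, 0 < c i) →
          coneSet w ⊆ ⋃ i : Fin (k + 1), coneSet (w ∘ i.succAbove) := by
        intro c hc hpos x hx
        obtain ⟨μ, hμ, hsum⟩ := hx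
        obtain ⟨ip, hip⟩ := hpos
        set P : Finset (Fin (k + 1)) := Finset.univ.filter (fun i => 0 < c i) with hP
        have hPne : P.Nonempty := ⟨ip, by simp [hP, hip]⟩
        obtain ⟨i₀, hi₀P, hmin⟩ := P.exists_min_image (fun i => μ i / c i) hPne
        have hci₀ : 0 < c i₀ := by simpa [hP] using hi₀P
        set t : ℝ := μ i₀ / c i₀ with htdef
        have ht : 0 ≤ t := div_nonneg (hμ i₀) hci₀.le
        set μ' : Fin (k + 1) → ℝ := fun i => μ i - t * c i with hμ'
        have hμ'nonneg : ∀ i, 0 ≤ μ' i := by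
          intro i
          by_cases hc' : 0 < c i
          · have : t ≤ μ i / c i := hmin i (by simp [hP, hc'])
            have := (le_div_iff₀ hc').mp this
            simp only [hμ']; linarith
          · push_neg at hc'
            have : t * c i ≤ 0 := mul_nonpos_of_nonneg_of_nonpos ht hc'
            have := hμ i
            simp only [hμ']; linarith
        have hμ'i₀ : μ' i₀ = 0 := by
          simp only [hμ', htdef]
          field_simp; ring
        have hsum' : ∑ i, μ' i • w i = x := by
          simp only [hμ', sub_smul, mul_smul, Finset.sum_sub_distrib, hsum,
            ← Finset.smul_sum, hc, smul_zero, sub_zero]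
        refine Set.mem_iUnion.mpr ⟨i₀, fun l => μ' (i₀.succAbove l), fun l => hμ'nonneg _, ?_⟩
        rw [Fin.sum_univ_succAbove (fun i => μ' i • w i) i₀, hμ'i₀, zero_smul, zero_add] at hsum'
        simpa [Function.comp] using hsum'
      have hcover : coneSet w = ⋃ i : Fin (k + 1), coneSet (w ∘ i.succAbove) := by
        refine subset_antisymm ?_ ?_
        · rcases lt_or_gt_of_ne hci with hneg | hposi
          · exact key (-c) (by simpa using hc0) ⟨i₁, by simpa using hneg⟩
          · exact key c hc0 ⟨i₁, hposi⟩
        · rintro x hx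
          obtain ⟨i, hi⟩ := Set.mem_iUnion.mp hx
          obtain ⟨μ, hμ, hsum⟩ := hi
          set ν : Fin (k + 1) → ℝ := i.insertNth 0 μ with hν
          refine ⟨ν, ?_, ?_⟩
          · intro j
            by_cases hj : j = i
            · subst hj; simp [hν]
            · obtain ⟨l, rfl⟩ := Fin.exists_succAbove_eq hj
              simpa [hν, Fin.insertNth_apply_succAbove] using hμ l
          · rw [Fin.sum_univ_succAbove (fun j => ν j • w j) i]
            simp only [hν, Fin.insertNth_apply_same, Fin.insertNth_apply_succAbove,
              zero_smul, zero_add]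
            simpa [Function.comp] using hsum
      rw [hcover]
      exact isClosed_iUnion_of_finite fun i => ih (w ∘ i.succAbove)

/-- Either a point belongs to the cone generated by finitely many vectors, or there is a
separating functional. -/
lemma coneSet_mem_or_sep [FiniteDimensional ℝ E] {k : ℕ} (w : Fin k → E) (z : E) :
    z ∈ coneSet w ∨ ∃ y : E →L[ℝ] ℝ, (∀ i, y (w i) ≤ 0) ∧ 0 < y z := by
  by_cases h : z ∈ coneSet w
  · exact Or.inl h
  · right
    obtain ⟨y, c, hy, hz⟩ :=
      geometric_hahn_banach_closed_point (convex_coneSet w) (isClosed_coneSet w) h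
    have hc : 0 < c := by simpa using hy 0 (zero_mem_coneSet w)
    refine ⟨y, fun i => ?_, hc.trans hz⟩
    by_contra hyp
    push_neg at hyp
    have hmem := smul_mem_coneSet w (t := (c + 1) / y (w i))
      (div_nonneg (by linarith) hyp.le) (gen_mem_coneSet w i)
    have := hy _ hmem
    rw [map_smul, smul_eq_mul, div_mul_cancel₀ _ (ne_of_gt hyp)] at this
    linarith

theorem motzkin_aux {s n m : ℕ}
    (a : Fin n → ((Fin s → ℝ) →L[ℝ] ℝ)) (b : Fin m → ((Fin s → ℝ) →L[ℝ] ℝ))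
    (fdd : Fin n → ℝ) (gdd : Fin m → ℝ) (act : Fin m → Prop) :
    (∃ (lam : Fin n → ℝ) (mu : Fin m → ℝ),
        (∀ j, 0 ≤ lam j) ∧ lam ≠ 0 ∧ (∀ i, 0 ≤ mu i) ∧
        (∀ i, ¬ act i → mu i = 0) ∧
        ((∑ j, lam j • a j) + ∑ i, mu i • b i = 0) ∧
        0 ≤ (∑ j, lam j * fdd j) + ∑ i, (if act i then mu i * gdd i else 0))
    ↔
    ((¬ ∃ (u : Fin s → ℝ) (v : ℝ), 0 < v ∧
        (∀ j, a j u + v * fdd j < 0) ∧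
        (∀ i, act i → b i u + v * gdd i ≤ 0)) ∧
     (¬ ∃ u : Fin s → ℝ, (∀ j, a j u < 0) ∧ (∀ i, act i → b i u ≤ 0))) := by
  classical
  set W : Fin (n + (m + 1)) → ((Fin s → ℝ) →L[ℝ] ℝ) × ℝ × ℝ :=
    Fin.addCases (fun j => (a j, fdd j, -1))
      (Fin.lastCases ((0 : (Fin s → ℝ) →L[ℝ] ℝ), -1, 0)
        (fun i => if act i then (b i, gdd i, 0) else 0)) with hW
  set z : ((Fin s → ℝ) →L[ℝ] ℝ) × ℝ × ℝ := (0, 0, -1) with hz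
  have hWl : ∀ j : Fin n, W (Fin.castAdd (m + 1) j) = (a j, fdd j, -1) := by
    intro j; simp only [hW]; rw [Fin.addCases_left]
  have hWr : ∀ i : Fin m, W (Fin.natAdd n i.castSucc) =
      (if act i then (b i, gdd i, 0) else 0) := by
    intro i; simp only [hW]; rw [Fin.addCases_right, Fin.lastCases_castSucc]
  have hWlast : W (Fin.natAdd n (Fin.last m)) = ((0 : (Fin s → ℝ) →L[ℝ] ℝ), -1, 0) := by
    simp only [hW]; rw [Fin.addCases_right, Fin.lastCases_last]
  have hsplit : ∀ {M : Type} [AddCommMonoid M] (F : Fin (n + (m + 1)) → M),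
      ∑ k, F k = ∑ j : Fin n, F (Fin.castAdd (m + 1) j) +
        (∑ i : Fin m, F (Fin.natAdd n i.castSucc) + F (Fin.natAdd n (Fin.last m))) := by
    intro M _ F
    rw [Fin.sum_univ_add]
    congr 1
    exact Fin.sum_univ_castSucc fun i => F (Fin.natAdd n i)
  -- (A) membership gives multipliers
  have memToMult : z ∈ coneSet W →
      ∃ (lam : Fin n → ℝ) (mu : Fin m → ℝ),
        (∀ j, 0 ≤ lam j) ∧ lam ≠ 0 ∧ (∀ i, 0 ≤ mu i) ∧
        (∀ i, ¬ act i → mu i = 0) ∧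
        ((∑ j, lam j • a j) + ∑ i, mu i • b i = 0) ∧
        0 ≤ (∑ j, lam j * fdd j) + ∑ i, (if act i then mu i * gdd i else 0) := by
    rintro ⟨ρ, hρ, hsum⟩
    set lam : Fin n → ℝ := fun j => ρ (Fin.castAdd (m + 1) j) with hlam
    set mu : Fin m → ℝ := fun i => if act i then ρ (Fin.natAdd n i.castSucc) else 0 with hmu
    set ν : ℝ := ρ (Fin.natAdd n (Fin.last m)) with hν
    have hc1 := congrArg (fun p => p.1) hsum
    have hc2 := congrArg (fun p => p.2.1) hsum
    have hc3 := congrArg (fun p => p.2.2) hsum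
    simp only [Prod.fst_sum, Prod.snd_sum, Prod.smul_fst, Prod.smul_snd, hz] at hc1 hc2 hc3
    rw [hsplit] at hc1 hc2 hc3
    simp only [hWl, hWr, hWlast, apply_ite Prod.fst, apply_ite Prod.snd,
      Prod.fst_zero, Prod.snd_zero, smul_eq_mul, smul_zero, mul_zero, mul_neg, mul_one,
      add_zero, zero_add] at hc1 hc2 hc3
    have hm1 : ∑ i : Fin m, ρ (Fin.natAdd n i.castSucc) • (if act i then b i else (0 : (Fin s → ℝ) →L[ℝ] ℝ)) =
        ∑ i, mu i • b i := by
      refine Finset.sum_congr rfl fun i _ => ?_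
      by_cases hi : act i <;> simp [hmu, hi]
    have hm2 : ∑ i : Fin m, ρ (Fin.natAdd n i.castSucc) * (if act i then gdd i else 0) =
        ∑ i, (if act i then mu i * gdd i else 0) := by
      refine Finset.sum_congr rfl fun i _ => ?_
      by_cases hi : act i <;> simp [hmu, hi]
    rw [hm1] at hc1
    rw [hm2] at hc2
    have h3 : ∑ j : Fin n, ρ (Fin.castAdd (m + 1) j) = 1 := by
      have h0 : (∑ x : Fin m, ρ (Fin.natAdd n x.castSucc) * if act x then (0:ℝ) else 0)
          = 0 := by simp
      rw [h0, add_zero, Finset.sum_neg_distrib] at hc3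
      linarith
    refine ⟨lam, mu, fun j => hρ _, ?_, ?_, ?_, hc1, ?_⟩
    · intro h0
      have : ∀ j, lam j = 0 := fun j => congrFun h0 j
      rw [Finset.sum_congr rfl fun j _ => this j] at h3
      simp at h3
    · intro i; by_cases hi : act i <;> simp [hmu, hi, hρ]
    · intro i hi; simp [hmu, hi]
    · have hν0 : 0 ≤ ν := hρ _
      have h2 : (∑ x : Fin n, ρ (Fin.castAdd (m + 1) x) * fdd x) +
          ((∑ i : Fin m, (if act i then mu i * gdd i else 0)) + -ν) = 0 := hc2
      have : (∑ j : Fin n, lam j * fdd j) = ∑ x : Fin n, ρ (Fin.castAdd (m + 1) x) * fdd x :=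
        rfl
      rw [this]
      linarith
  -- (B) multipliers give contradiction with either system
  have contra : ∀ (lam : Fin n → ℝ) (mu : Fin m → ℝ),
      (∀ j, 0 ≤ lam j) → lam ≠ 0 → (∀ i, 0 ≤ mu i) → (∀ i, ¬ act i → mu i = 0) →
      ((∑ j, lam j • a j) + ∑ i, mu i • b i = 0) →
      0 ≤ (∑ j, lam j * fdd j) + ∑ i, (if act i then mu i * gdd i else 0) →
      ∀ (u : Fin s → ℝ) (v : ℝ), 0 ≤ v →
      (∀ j, a j u + v * fdd j < 0) → (∀ i, act i → b i u + v * gdd i ≤ 0) → False := by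
    intro lam mu hlam0 hlamne hmu0 hmuin heq hso u v hv hfu hgu
    obtain ⟨j₀, hj₀⟩ := Function.ne_iff.mp hlamne
    have hj₀pos : 0 < lam j₀ := lt_of_le_of_ne (hlam0 j₀) (Ne.symm hj₀)
    have heval : (∑ j, lam j * a j u) + ∑ i, mu i * b i u = 0 := by
      have := congrArg (fun L : (Fin s → ℝ) →L[ℝ] ℝ => L u) heq
      simpa [ContinuousLinearMap.sum_apply, ContinuousLinearMap.add_apply,
        ContinuousLinearMap.coe_smul', Pi.smul_apply, smul_eq_mul] using this
    have hS1 : ∑ j, lam j * (a j u + v * fdd j) < 0 := by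
      have h := Finset.sum_lt_sum
        (f := fun j => lam j * (a j u + v * fdd j)) (g := fun _ => (0:ℝ))
        (fun j _ => mul_nonpos_of_nonneg_of_nonpos (hlam0 j) (hfu j).le)
        ⟨j₀, Finset.mem_univ j₀, mul_neg_of_pos_of_neg hj₀pos (hfu j₀)⟩
      simpa using h
    have hS2 : ∑ i, (if act i then mu i * (b i u + v * gdd i) else 0) ≤ 0 := by
      refine Finset.sum_nonpos fun i _ => ?_
      by_cases hi : act i
      · simp only [hi, if_true]
        exact mul_nonpos_of_nonneg_of_nonpos (hmu0 i) (hgu i hi)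
      · simp [hi]
    have hexp1 : ∑ j, lam j * (a j u + v * fdd j)
        = (∑ j, lam j * a j u) + v * ∑ j, lam j * fdd j := by
      rw [Finset.mul_sum, ← Finset.sum_add_distrib]
      exact Finset.sum_congr rfl fun j _ => by ring
    have hexp2 : ∑ i, (if act i then mu i * (b i u + v * gdd i) else 0)
        = (∑ i, mu i * b i u) + v * ∑ i, (if act i then mu i * gdd i else 0) := by
      rw [Finset.mul_sum, ← Finset.sum_add_distrib]
      refine Finset.sum_congr rfl fun i _ => ?_
      by_cases hi : act i
      · simp only [hi, if_true]; ring
      · simp [hi, hmuin i hi]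
    have hvν : 0 ≤ v * ((∑ j, lam j * fdd j) + ∑ i, (if act i then mu i * gdd i else 0)) :=
      mul_nonneg hv hso
    rw [mul_add] at hvν
    linarith
  -- (C) a separating functional yields a solution of one of the systems
  have sepToSys : (∃ y : (((Fin s → ℝ) →L[ℝ] ℝ) × ℝ × ℝ) →L[ℝ] ℝ,
      (∀ k, y (W k) ≤ 0) ∧ 0 < y z) →
      (∃ (u : Fin s → ℝ) (v : ℝ), 0 < v ∧ (∀ j, a j u + v * fdd j < 0) ∧
        (∀ i, act i → b i u + v * gdd i ≤ 0)) ∨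
      (∃ u : Fin s → ℝ, (∀ j, a j u < 0) ∧ (∀ i, act i → b i u ≤ 0)) := by
    rintro ⟨y, hyW, hyz⟩
    set φ : Module.Dual ℝ (Module.Dual ℝ (Fin s → ℝ)) :=
      y.toLinearMap ∘ₗ LinearMap.inl ℝ ((Fin s → ℝ) →L[ℝ] ℝ) (ℝ × ℝ) ∘ₗ
        (LinearMap.toContinuousLinearMap :
          ((Fin s → ℝ) →ₗ[ℝ] ℝ) ≃ₗ[ℝ] ((Fin s → ℝ) →L[ℝ] ℝ)).toLinearMap with hφ
    set u : Fin s → ℝ := (Module.evalEquiv ℝ (Fin s → ℝ)).symm φ with hu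
    have hyL : ∀ L : (Fin s → ℝ) →L[ℝ] ℝ, y (L, 0, 0) = L u := by
      intro L
      have h1 := Module.apply_evalEquiv_symm_apply ℝ (Fin s → ℝ) (L : (Fin s → ℝ) →ₗ[ℝ] ℝ) φ
      rw [← hu] at h1
      have h2 : φ (L : (Fin s → ℝ) →ₗ[ℝ] ℝ) = y (L, 0, 0) := by
        have h3 : LinearMap.toContinuousLinearMap ((L : (Fin s → ℝ) →ₗ[ℝ] ℝ)) = L :=
          (LinearMap.toContinuousLinearMap (E := Fin s → ℝ) (F' := ℝ)).apply_symm_apply L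
        simp only [hφ, LinearMap.coe_comp, Function.comp_apply, LinearEquiv.coe_coe,
          LinearMap.inl_apply, ContinuousLinearMap.coe_coe, h3]
        rfl
      rw [h2] at h1
      exact h1.symm
    set v : ℝ := y (0, 1, 0) with hv
    set r : ℝ := y (0, 0, 1) with hr
    have hdec : ∀ (L : (Fin s → ℝ) →L[ℝ] ℝ) (x t : ℝ), y (L, x, t) = L u + x * v + t * r := by
      intro L x t
      have hsplit2 : (L, x, t) = ((L, 0, 0) : ((Fin s → ℝ) →L[ℝ] ℝ) × ℝ × ℝ)
          + x • (0, 1, 0) + t • (0, 0, 1) := by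
        simp [Prod.smul_mk]
      rw [hsplit2, map_add, map_add, map_smul, map_smul, smul_eq_mul, smul_eq_mul, hyL]
    have hrneg : r < 0 := by
      have hyz' : y z = -r := by
        rw [hz, hdec]
        simp [ContinuousLinearMap.zero_apply]
      rw [hyz'] at hyz
      linarith
    have hv0 : 0 ≤ v := by
      have h := hyW (Fin.natAdd n (Fin.last m))
      rw [hWlast, hdec] at h
      simp [ContinuousLinearMap.zero_apply] at h
      linarith
    have hfj : ∀ j, a j u + v * fdd j < 0 := by
      intro j
      have h := hyW (Fin.castAdd (m + 1) j)
      rw [hWl, hdec] at h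
      rw [mul_comm v (fdd j)]
      linarith
    have hgi : ∀ i, act i → b i u + v * gdd i ≤ 0 := by
      intro i hi
      have h := hyW (Fin.natAdd n i.castSucc)
      rw [hWr] at h
      simp only [hi, if_true] at h
      rw [hdec] at h
      rw [mul_comm v (gdd i)]
      linarith
    rcases eq_or_lt_of_le hv0 with hveq | hvpos
    · right
      refine ⟨u, fun j => ?_, fun i hi => ?_⟩
      · have := hfj j; rw [← hveq] at this; simpa using this
      · have := hgi i hi; rw [← hveq] at this; simpa using this
    · left
      exact ⟨u, v, hvpos, hfj, hgi⟩
  -- Assemble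
  constructor
  · rintro ⟨lam, mu, h1, h2, h3, h4, h5, h6⟩
    constructor
    · rintro ⟨u, v, hvpos, hfu, hgu⟩
      exact contra lam mu h1 h2 h3 h4 h5 h6 u v hvpos.le hfu hgu
    · rintro ⟨u, hfu, hgu⟩
      refine contra lam mu h1 h2 h3 h4 h5 h6 u 0 le_rfl
        (fun j => by simpa using hfu j) (fun i hi => by simpa using hgu i hi)
  · rintro ⟨hns1, hns2⟩
    rcases coneSet_mem_or_sep W z with hmem | hsep
    · exact memToMult hmem
    · rcases sepToSys hsep with h | h
      · exact absurd h hns1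
      · exact absurd h hns2

/-- for a feasible `x̄` and a nonzero critical direction `d`, with the stated
differentiability assumptions, the existence of Lagrange multipliers `λ ≥ 0`, `λ ≠ 0`, `μ ≥ 0`
satisfying the second-order KKT conditions is equivalent to the inconsistency of both
systems (1) and (2). -/
theorem statement8 {s n m : ℕ} (X : Set (Fin s → ℝ)) (hX : IsOpen X)
    (f : Fin n → (Fin s → ℝ) → ℝ) (g : Fin m → (Fin s → ℝ) → ℝ)
    (xbar d : Fin s → ℝ) (hxX : xbar ∈ X) (hfeas : ∀ i, g i xbar ≤ 0)
    (hd : d ≠ 0)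
    -- d is a critical direction
    (hcritf : ∀ j, fderiv ℝ (f j) xbar d ≤ 0)
    (hcritg : ∀ i, g i xbar = 0 → fderiv ℝ (g i) xbar d ≤ 0)
    -- differentiability assumptions
    (hdifff : ∀ j, DifferentiableAt ℝ (f j) xbar)
    (hdiffg : ∀ i, g i xbar = 0 → DifferentiableAt ℝ (g i) xbar)
    -- second-order directional derivatives
    (fdd : Fin n → ℝ) (gdd : Fin m → ℝ)
    (hfdd : ∀ j, HasDirDeriv2 (f j) xbar d (fdd j))
    (hgdd : ∀ i, g i xbar = 0 → HasDirDeriv2 (g i) xbar d (gdd i)) :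
    (∃ (lam : Fin n → ℝ) (mu : Fin m → ℝ),
        (∀ j, 0 ≤ lam j) ∧ lam ≠ 0 ∧ (∀ i, 0 ≤ mu i) ∧
        (∀ i, mu i * g i xbar = 0) ∧
        ((∑ j, lam j • fderiv ℝ (f j) xbar) + ∑ i, mu i • fderiv ℝ (g i) xbar = 0) ∧
        0 ≤ (∑ j, lam j * fdd j) + ∑ i, (if g i xbar = 0 then mu i * gdd i else 0))
    ↔
    ((¬ ∃ (u : Fin s → ℝ) (v : ℝ), 0 < v ∧
        (∀ j, fderiv ℝ (f j) xbar u + v * fdd j < 0) ∧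
        (∀ i, g i xbar = 0 → fderiv ℝ (g i) xbar u + v * gdd i ≤ 0)) ∧
     (¬ ∃ u : Fin s → ℝ,
        (∀ j, fderiv ℝ (f j) xbar u < 0) ∧
        (∀ i, g i xbar = 0 → fderiv ℝ (g i) xbar u ≤ 0))) := by
  classical
  have key := motzkin_aux (fun j => fderiv ℝ (f j) xbar) (fun i => fderiv ℝ (g i) xbar)
    fdd gdd (fun i => g i xbar = 0)
  constructor
  · rintro ⟨lam, mu, h1, h2, h3, h4, h5, h6⟩
    refine key.mp ⟨lam, mu, h1, h2, h3, fun i hi => ?_, h5, h6⟩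
    have hlt : g i xbar < 0 := lt_of_le_of_ne (hfeas i) hi
    rcases mul_eq_zero.mp (h4 i) with h | h
    · exact h
    · exact absurd h (ne_of_lt hlt)
  · intro hr
    obtain ⟨lam, mu, h1, h2, h3, h4, h5, h6⟩ := key.mpr hr
    refine ⟨lam, mu, h1, h2, h3, fun i => ?_, h5, h6⟩
    by_cases hi : g i xbar = 0
    · rw [hi]; ring
    · rw [h4 i hi]; ring
end
end

section
/- (Dual second-order KKT necessary conditions.) Let x̄ be a weak local Pareto minimizer of problem (VP) and let d be a nonzero critical direction at x̄. Suppose Conditions (C) are satisfied, and assume both the second-order Zangwill constraint qualification cl(A(x̄,d)) = B(x̄,d) and the Abadie constraint qualification L(x̄) = T(S,x̄) hold (and that the second-order directional derivatives f_j''(x̄,d), j = 1,…,n, and g_i''(x̄,d), i ∈ I(x̄), exist). Then there exist Lagrange multipliers λ ∈ ℝⁿ, μ ∈ ℝ^m with λ ≥ 0 componentwise, λ ≠ 0, μ ≥ 0 componentwise, such that μ_i g_i(x̄) = 0 for i = 1,…,m, Σ_{j=1}^n λ_j ∇f_j(x̄) + Σ_{i=1}^m μ_i ∇g_i(x̄)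 = 0, and Σ_{j=1}^n λ_j f_j''(x̄,d) + Σ_{i ∈ I(x̄)} μ_i g_i''(x̄,d) ≥ 0. -/
open Set Filter Topology
open scoped Classical

noncomputable section

/-- The Bouligand tangent (contingent) cone to `S` at `x`. -/
def bouligandTangentCone {s : ℕ} (S : Set (Fin s → ℝ)) (x : Fin s → ℝ) :
    Set (Fin s → ℝ) :=
  {u | ∃ (t : ℕ → ℝ) (uk : ℕ → Fin s → ℝ),
    (∀ k, 0 < t k) ∧ Filter.Tendsto t Filter.atTop (𝓝 0) ∧
    Filter.Tendsto uk Filter.atTop (𝓝 u) ∧ ∀ k, x + t k • uk k ∈ S}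


section Helpers
open Matrix Finset


lemma sum_dot {N n : ℕ} (c : Fin n → ℝ) (w : Fin n → Fin N → ℝ) (z : Fin N → ℝ) :
    (∑ i, c i • w i) ⬝ᵥ z = ∑ i, c i * (w i ⬝ᵥ z) := by
  induction n with
  | zero => simp
  | succ n ih =>
    rw [Fin.sum_univ_castSucc, Fin.sum_univ_castSucc (f := fun i => c i * (w i ⬝ᵥ z)),
      add_dotProduct, ih, smul_dotProduct, smul_eq_mul]

lemma farkas {N : ℕ} : ∀ (n : ℕ) (v : Fin n → Fin N → ℝ) (b : Fin N → ℝ),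
    (∃ μ : Fin n → ℝ, (∀ i, 0 ≤ μ i) ∧ ∑ i, μ i • v i = b) ∨
    ∃ z, (∀ i, v i ⬝ᵥ z ≤ 0) ∧ 0 < b ⬝ᵥ z := by
  intro n
  induction n with
  | zero =>
    intro v b
    by_cases hb : b = 0
    · exact Or.inl ⟨0, fun i => le_rfl, by simp [hb]⟩
    · refine Or.inr ⟨b, fun i => i.elim0, ?_⟩
      have hnn : 0 ≤ b ⬝ᵥ b := Finset.sum_nonneg fun i _ => mul_self_nonneg (b i)
      rcases lt_or_eq_of_le hnn with h | h
      · exact h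
      · exact absurd (dotProduct_self_eq_zero.1 h.symm) hb
  | succ n ih =>
    intro v b
    set vl := v (Fin.last n) with hvl
    set v0 : Fin n → Fin N → ℝ := fun i => v i.castSucc with hv0
    rcases ih v0 b with ⟨μ0, hμ0, hsum⟩ | ⟨z, hz, hbz⟩
    · refine Or.inl ⟨Fin.snoc μ0 0, ?_, ?_⟩
      · intro i
        refine Fin.lastCases ?_ ?_ i <;> simp [Fin.snoc_castSucc]
        intro j; exact hμ0 j
      · rw [Fin.sum_univ_castSucc]
        simp [Fin.snoc_castSucc, hsum]
        exact hsum
    · by_cases hvlz : vl ⬝ᵥ z ≤ 0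
      · refine Or.inr ⟨z, ?_, hbz⟩
        intro i
        refine Fin.lastCases hvlz (fun j => hz j) i
      · push_neg at hvlz
        set proj : (Fin N → ℝ) → (Fin N → ℝ) := fun w => w - ((w ⬝ᵥ z) / (vl ⬝ᵥ z)) • vl
          with hproj
        rcases ih (fun i => proj (v0 i)) (proj b) with ⟨μ', hμ', hsum'⟩ | ⟨z', hz', hbz'⟩
        · set α : ℝ := (b ⬝ᵥ z - ∑ i, μ' i * (v0 i ⬝ᵥ z)) / (vl ⬝ᵥ z) with hα
          have hαpos : 0 ≤ α := by
            apply div_nonneg _ hvlz.le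
            have : ∑ i, μ' i * (v0 i ⬝ᵥ z) ≤ 0 :=
              Finset.sum_nonpos fun i _ => mul_nonpos_of_nonneg_of_nonpos (hμ' i) (hz i)
            linarith
          refine Or.inl ⟨Fin.snoc μ' α, ?_, ?_⟩
          · intro i
            refine Fin.lastCases ?_ ?_ i
            · simpa using hαpos
            · intro j; simp only [Fin.snoc_castSucc]; exact hμ' j
          · rw [Fin.sum_univ_castSucc]
            simp only [Fin.snoc_castSucc, Fin.snoc_last]
            have hexp : ∑ i, μ' i • v0 i - (∑ i, μ' i * (v0 i ⬝ᵥ z) / (vl ⬝ᵥ z)) • vl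
                = b - ((b ⬝ᵥ z) / (vl ⬝ᵥ z)) • vl := by
              calc ∑ i, μ' i • v0 i - (∑ i, μ' i * (v0 i ⬝ᵥ z) / (vl ⬝ᵥ z)) • vl
                  = ∑ i, μ' i • proj (v0 i) := by
                    rw [hproj]
                    simp only [smul_sub, Finset.sum_sub_distrib, smul_smul]
                    congr 1
                    rw [← Finset.sum_smul]
                    congr 1
                    apply Finset.sum_congr rfl
                    intro i _
                    ring
                _ = proj b := hsum'
                _ = b - ((b ⬝ᵥ z) / (vl ⬝ᵥ z)) • vl := rfl
            have : ∑ i, μ' i • v0 i + α • vl = b := by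
              rw [hα, sub_div, Finset.sum_div]
              rw [sub_smul]
              have h2 : (∑ i, μ' i * (v0 i ⬝ᵥ z) / (vl ⬝ᵥ z)) • vl
                  = ∑ i, μ' i • v0 i - (b - ((b ⬝ᵥ z) / (vl ⬝ᵥ z)) • vl) := by
                rw [← hexp]; ring_nf
              rw [h2]; abel
            exact this
        · -- construct z''
          set z'' : Fin N → ℝ := z' - ((vl ⬝ᵥ z') / (vl ⬝ᵥ z)) • z with hz''
          have key : ∀ w : Fin N → ℝ, w ⬝ᵥ z'' = proj w ⬝ᵥ z' := by
            intro w
            rw [hz'', hproj]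
            simp only [dotProduct_sub, sub_dotProduct, dotProduct_smul,
              smul_dotProduct]
            simp only [smul_eq_mul]
            field_simp
          refine Or.inr ⟨z'', ?_, ?_⟩
          · intro i
            refine Fin.lastCases ?_ ?_ i
            · rw [key vl, hproj]
              simp only [sub_dotProduct, smul_dotProduct, smul_eq_mul]
              rw [div_self (ne_of_gt hvlz), one_mul, sub_self]
            · intro j
              rw [key (v0 j)]
              exact hz' j
          · rw [key b]; exact hbz'

lemma farkas' {N : ℕ} {ι : Type} [Fintype ι] (v : ι → Fin N → ℝ) (b : Fin N → ℝ) :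
    (∃ μ : ι → ℝ, (∀ i, 0 ≤ μ i) ∧ ∑ i, μ i • v i = b) ∨
    ∃ z, (∀ i, v i ⬝ᵥ z ≤ 0) ∧ 0 < b ⬝ᵥ z := by
  classical
  let e := Fintype.equivFin ι
  rcases farkas (Fintype.card ι) (v ∘ e.symm) b with ⟨μ, hμ, hsum⟩ | ⟨z, hz, hbz⟩
  · refine Or.inl ⟨μ ∘ e, fun i => hμ _, ?_⟩
    rw [← hsum]
    exact Fintype.sum_equiv e _ _ (fun i => by simp)
  · exact Or.inr ⟨z, fun i => by simpa using hz (e i), hbz⟩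

lemma gordan {N n m : ℕ} (a : Fin n → Fin N → ℝ) (c : Fin m → Fin N → ℝ)
    (J : Finset (Fin n)) (K : Finset (Fin m)) (hJ : J.Nonempty)
    (h : ¬ ∃ z : Fin N → ℝ, (∀ j ∈ J, a j ⬝ᵥ z < 0) ∧ (∀ i ∈ K, c i ⬝ᵥ z ≤ 0)) :
    ∃ (lam : Fin n → ℝ) (mu : Fin m → ℝ),
      (∀ j, 0 ≤ lam j) ∧ (∀ i, 0 ≤ mu i) ∧ (∀ j, j ∉ J → lam j = 0) ∧ (∀ i, i ∉ K → mu i = 0) ∧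
      (∑ j, lam j = 1) ∧ (∑ j, lam j • a j + ∑ i, mu i • c i = 0) := by
  classical
  set w : ({x // x ∈ J} ⊕ {x // x ∈ K}) → (Fin (N+1) → ℝ) := fun i =>
    Sum.elim (fun j : {x // x ∈ J} => (Matrix.vecCons 1 (a j) : Fin (N+1) → ℝ))
      (fun i : {x // x ∈ K} => (Matrix.vecCons 0 (c i) : Fin (N+1) → ℝ)) i with hw
  rcases farkas' w (Matrix.vecCons 1 0) with ⟨μ, hμ, hsum⟩ | ⟨z, hz, hbz⟩
  · -- extract multipliers
    set lam : Fin n → ℝ := fun j => if hj : j ∈ J then μ (Sum.inl ⟨j, hj⟩) else 0 with hlam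
    set mu : Fin m → ℝ := fun i => if hi : i ∈ K then μ (Sum.inr ⟨i, hi⟩) else 0 with hmu
    have hsum2 : (∑ j : {x // x ∈ J}, μ (Sum.inl j) • (Matrix.vecCons 1 (a j) : Fin (N+1) → ℝ))
        + (∑ i : {x // x ∈ K}, μ (Sum.inr i) • (Matrix.vecCons 0 (c i) : Fin (N+1) → ℝ))
        = (Matrix.vecCons 1 0 : Fin (N+1) → ℝ) := by
      rw [← hsum, Fintype.sum_sum_type]
      rfl
    have hhead : ∑ j : {x // x ∈ J}, μ (Sum.inl j) = 1 := by
      have := congrFun hsum2 0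
      simpa using this
    have htail : ∀ k : Fin N,
        (∑ j : {x // x ∈ J}, μ (Sum.inl j) * a j k) +
        (∑ i : {x // x ∈ K}, μ (Sum.inr i) * c i k) = 0 := by
      intro k
      have := congrFun hsum2 k.succ
      simpa using this
    have hlamJ : ∀ (F : Fin n → ℝ),
        (∑ j, lam j * F j) = ∑ j : {x // x ∈ J}, μ (Sum.inl j) * F j := by
      intro F
      rw [← Finset.sum_subset (Finset.subset_univ J)
        (fun j _ hj => by simp [hlam, dif_neg hj])]
      rw [← Finset.sum_coe_sort J (fun j => lam j * F j)]
      refine Finset.sum_congr rfl fun j _ => ?_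
      simp [hlam, dif_pos j.2]
    have hmuK : ∀ (F : Fin m → ℝ),
        (∑ i, mu i * F i) = ∑ i : {x // x ∈ K}, μ (Sum.inr i) * F i := by
      intro F
      rw [← Finset.sum_subset (Finset.subset_univ K)
        (fun i _ hi => by simp [hmu, dif_neg hi])]
      rw [← Finset.sum_coe_sort K (fun i => mu i * F i)]
      refine Finset.sum_congr rfl fun i _ => ?_
      simp [hmu, dif_pos i.2]
    refine ⟨lam, mu, ?_, ?_, ?_, ?_, ?_, ?_⟩
    · intro j; rw [hlam]; dsimp only; split
      · exact hμ _
      · exact le_rfl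
    · intro i; rw [hmu]; dsimp only; split
      · exact hμ _
      · exact le_rfl
    · intro j hj; simp [hlam, dif_neg hj]
    · intro i hi; simp [hmu, dif_neg hi]
    · have h1 := hlamJ (fun _ => 1)
      simp only [mul_one] at h1
      exact h1.trans hhead
    · funext k
      have h1 := hlamJ (fun j => a j k)
      have h2 := hmuK (fun i => c i k)
      have := htail k
      simp only [Pi.add_apply, Finset.sum_apply, Pi.smul_apply, smul_eq_mul, Pi.zero_apply]
      rw [h1, h2]
      exact this
  · -- contradiction with infeasibility
    exfalso
    apply h
    refine ⟨Matrix.vecTail z, ?_, ?_⟩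
    · intro j hj
      have := hz (Sum.inl ⟨j, hj⟩)
      have hzz : (0:ℝ) < z 0 := by
        simpa [Matrix.cons_dotProduct, Matrix.vecHead, zero_dotProduct] using hbz
      rw [hw] at this
      simp only [Sum.elim_inl, Matrix.cons_dotProduct, one_mul] at this
      have : z 0 + a j ⬝ᵥ Matrix.vecTail z ≤ 0 := by
        simpa [Matrix.vecHead, Matrix.vecTail] using this
      linarith
    · intro i hi
      have := hz (Sum.inr ⟨i, hi⟩)
      rw [hw] at this
      simpa [Matrix.cons_dotProduct, Matrix.vecHead, Matrix.vecTail] using this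

lemma gordan_cons {N n m : ℕ} (e : Fin N → ℝ) (a : Fin n → Fin N → ℝ) (c : Fin m → Fin N → ℝ)
    (J : Finset (Fin n)) (K : Finset (Fin m))
    (h : ¬ ∃ z : Fin N → ℝ, (e ⬝ᵥ z < 0) ∧ (∀ j ∈ J, a j ⬝ᵥ z < 0) ∧ (∀ i ∈ K, c i ⬝ᵥ z ≤ 0)) :
    ∃ (lam0 : ℝ) (lam : Fin n → ℝ) (mu : Fin m → ℝ),
      0 ≤ lam0 ∧ (∀ j, 0 ≤ lam j) ∧ (∀ i, 0 ≤ mu i) ∧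
      (∀ j, j ∉ J → lam j = 0) ∧ (∀ i, i ∉ K → mu i = 0) ∧
      (lam0 + ∑ j, lam j = 1) ∧
      (lam0 • e + ∑ j, lam j • a j + ∑ i, mu i • c i = 0) := by
  classical
  set a' : Fin (n+1) → Fin N → ℝ := Fin.cons e a with ha'
  set J' : Finset (Fin (n+1)) := insert 0 (J.map (Fin.succEmb n)) with hJ'
  have hinfeas : ¬ ∃ z : Fin N → ℝ, (∀ j ∈ J', a' j ⬝ᵥ z < 0) ∧ (∀ i ∈ K, c i ⬝ᵥ z ≤ 0) := by
    rintro ⟨z, hJz, hKz⟩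
    apply h
    refine ⟨z, ?_, ?_, hKz⟩
    · have := hJz 0 (Finset.mem_insert_self _ _)
      simpa [ha'] using this
    · intro j hj
      have hmem : j.succ ∈ J' := by
        rw [hJ']
        exact Finset.mem_insert_of_mem (Finset.mem_map_of_mem _ hj)
      have := hJz j.succ hmem
      simpa [ha', Fin.cons_succ] using this
  obtain ⟨lam', mu, hlam'0, hmu0, hlam'J, hmuK, hlam'sum, hveceq⟩ :=
    gordan a' c J' K ⟨0, Finset.mem_insert_self _ _⟩ hinfeas
  refine ⟨lam' 0, fun j => lam' j.succ, mu, hlam'0 0, fun j => hlam'0 _, hmu0, ?_, hmuK, ?_, ?_⟩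
  · intro j hj
    apply hlam'J
    rw [hJ']
    intro hmem
    rcases Finset.mem_insert.1 hmem with h0 | hmap
    · exact absurd h0 (Fin.succ_ne_zero j)
    · obtain ⟨j'', hj'', hjeq⟩ := Finset.mem_map.1 hmap
      have : j'' = j := by
        apply Fin.succ_injective
        exact hjeq
      rw [this] at hj''
      exact hj hj''
  · rw [← hlam'sum, Fin.sum_univ_succ]
  · rw [← hveceq, Fin.sum_univ_succ]
    simp [ha', Fin.cons_succ, add_assoc]

def vecOf {s : ℕ} (φ : (Fin s → ℝ) →L[ℝ] ℝ) : Fin s → ℝ := fun i => φ (Pi.single i 1)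

lemma vecOf_dot {s : ℕ} (φ : (Fin s → ℝ) →L[ℝ] ℝ) (z : Fin s → ℝ) :
    vecOf φ ⬝ᵥ z = φ z := by
  have hz : z = ∑ i, z i • (Pi.single i (1:ℝ) : Fin s → ℝ) := by
    have := Finset.univ_sum_single z
    rw [← this]
    refine Finset.sum_congr rfl fun i _ => ?_
    funext k
    by_cases hk : k = i
    · subst hk; simp
    · simp [Pi.single_apply, hk]
  conv_rhs => rw [hz]
  rw [map_sum]
  rw [dotProduct]
  refine Finset.sum_congr rfl fun i _ => ?_
  rw [ContinuousLinearMap.map_smul, smul_eq_mul, vecOf, mul_comm]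

variable {s : ℕ}

lemma curve_hasDerivAt (x d z : Fin s → ℝ) :
    HasDerivAt (fun t : ℝ => x + t • d + (t ^ 2 / 2) • z) d 0 := by
  have h1 : HasDerivAt (fun t : ℝ => t • d) d 0 := by
    simpa using (hasDerivAt_id (0:ℝ)).smul_const d
  have h2 : HasDerivAt (fun t : ℝ => (t ^ 2 / 2) • z) ((0:ℝ) • z) 0 := by
    have hp : HasDerivAt (fun t : ℝ => t ^ 2 / 2) 0 0 := by
      simpa using (hasDerivAt_pow 2 (0:ℝ)).div_const 2
    exact hp.smul_const z
  have h0 : HasDerivAt (fun _ : ℝ => x) 0 0 := hasDerivAt_const 0 x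
  have := (h0.add h1).add h2
  rw [zero_add, zero_smul, add_zero] at this
  exact this

lemma tendsto_slope_curve {h : (Fin s → ℝ) → ℝ} {x : Fin s → ℝ} (d z : Fin s → ℝ)
    (hd : DifferentiableAt ℝ h x) :
    Tendsto (fun t : ℝ => (h (x + t • d + (t ^ 2 / 2) • z) - h x) / t) (𝓝[>] 0)
      (𝓝 (fderiv ℝ h x d)) := by
  set ψ : ℝ → (Fin s → ℝ) := fun t => x + t • d + (t ^ 2 / 2) • z with hψ
  have hψ0 : ψ 0 = x := by simp [hψ]
  have hc : HasDerivAt (fun t => h (ψ t)) (fderiv ℝ h x d) 0 := by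
    have h1 := hd.hasFDerivAt
    rw [← hψ0] at h1
    have h2 := h1.comp_hasDerivAt 0 (curve_hasDerivAt x d z)
    rw [hψ0] at h2
    exact h2
  have := hasDerivAt_iff_tendsto_slope.1 hc
  have h2 : Tendsto (slope (fun t => h (ψ t)) 0) (𝓝[>] 0) (𝓝 (fderiv ℝ h x d)) :=
    this.mono_left (nhdsWithin_mono 0 (fun t ht => ne_of_gt ht))
  refine h2.congr fun t => ?_
  simp [slope, hψ0]
  ring

lemma eventually_lt_of_deriv_neg {h : (Fin s → ℝ) → ℝ} {x : Fin s → ℝ} (d z : Fin s → ℝ)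
    (hd : DifferentiableAt ℝ h x) (hneg : fderiv ℝ h x d < 0) :
    ∀ᶠ t in 𝓝[>] (0:ℝ), h (x + t • d + (t ^ 2 / 2) • z) < h x := by
  have h1 := (tendsto_slope_curve d z hd).eventually_lt_const hneg
  filter_upwards [h1, self_mem_nhdsWithin] with t ht (htpos : 0 < t)
  have := div_neg_iff.1 (lt_of_lt_of_le ht le_rfl)
  rcases this with ⟨hnum, _⟩ | ⟨hnum, hden⟩
  · linarith
  · linarith

set_option maxHeartbeats 1000000 in
lemma tendsto_expand2 {X : Set (Fin s → ℝ)} (hX : IsOpen X) {x : Fin s → ℝ} (hxX : x ∈ X)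
    {h : (Fin s → ℝ) → ℝ} (hC1 : ContDiffOn ℝ 1 h X) {d : Fin s → ℝ} {D : ℝ}
    (hdd : HasDirDeriv2 h x d D) (z : Fin s → ℝ) :
    Tendsto (fun t : ℝ => 2 / t ^ 2 *
        (h (x + t • d + (t ^ 2 / 2) • z) - h x - t * fderiv ℝ h x d))
      (𝓝[>] 0) (𝓝 (D + fderiv ℝ h x z)) := by
  have hBt : Tendsto (fun t : ℝ => 2 / t ^ 2 *
      (h (x + t • d + (t ^ 2 / 2) • z) - h (x + t • d))) (𝓝[>] 0)
      (𝓝 (fderiv ℝ h x z)) := by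
    rw [Metric.tendsto_nhds]
    intro ε hε
    have hz1 : (0:ℝ) < ‖z‖ + 1 := by positivity
    set ε' : ℝ := ε / (2 * (‖z‖ + 1)) with hε'def
    have hε' : 0 < ε' := by positivity
    have hε'ne : ε' * (‖z‖ + 1) = ε / 2 := by
      rw [hε'def]
      rw [div_mul_eq_mul_div, mul_comm (2:ℝ) (‖z‖ + 1), ← div_div,
        mul_div_assoc, div_self (ne_of_gt hz1), mul_one]
    clear_value ε'
    -- continuity of fderiv at x
    have hcont : ContinuousOn (fderiv ℝ h) X := hC1.continuousOn_fderiv_of_isOpen hX le_rfl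
    have hca : ContinuousAt (fderiv ℝ h) x := hcont.continuousAt (hX.mem_nhds hxX)
    obtain ⟨r₁, hr₁, hball⟩ := Metric.continuousAt_iff.1 hca ε' hε'
    obtain ⟨r₂, hr₂, hsub⟩ := Metric.isOpen_iff.1 hX x hxX
    set r := min r₁ r₂ with hrdef
    have hr : 0 < r := lt_min hr₁ hr₂
    have hrle1 : r ≤ r₁ := min_le_left _ _
    have hrle2 : r ≤ r₂ := min_le_right _ _
    clear_value r
    have hballX : Metric.ball x r ⊆ X := fun y hy => hsub (Metric.mem_ball.2 (lt_of_lt_of_le (Metric.mem_ball.1 hy) hrle2))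
    -- eventual membership
    have hc1 : Tendsto (fun t : ℝ => x + t • d) (𝓝[>] 0) (𝓝 x) := by
      have : Continuous (fun t : ℝ => x + t • d) := by continuity
      have h0 : Tendsto (fun t : ℝ => x + t • d) (𝓝 0) (𝓝 x) := by
        simpa using this.tendsto 0
      exact h0.mono_left nhdsWithin_le_nhds
    have hc2 : Tendsto (fun t : ℝ => x + t • d + (t ^ 2 / 2) • z) (𝓝[>] 0) (𝓝 x) := by
      have : Continuous (fun t : ℝ => x + t • d + (t ^ 2 / 2) • z) := by continuity
      have h0 : Tendsto (fun t : ℝ => x + t • d + (t ^ 2 / 2) • z) (𝓝 0) (𝓝 x) := by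
        simpa using this.tendsto 0
      exact h0.mono_left nhdsWithin_le_nhds
    have ev1 : ∀ᶠ t in 𝓝[>] (0:ℝ), x + t • d ∈ Metric.ball x r :=
      hc1 (Metric.ball_mem_nhds x hr)
    have ev2 : ∀ᶠ t in 𝓝[>] (0:ℝ), x + t • d + (t ^ 2 / 2) • z ∈ Metric.ball x r :=
      hc2 (Metric.ball_mem_nhds x hr)
    filter_upwards [ev1, ev2, self_mem_nhdsWithin] with t h1 h2 (ht : 0 < t)
    -- mean value estimate
    set a := x + t • d with ha
    set b := x + t • d + (t ^ 2 / 2) • z with hb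
    clear_value a b
    have hdiffball : ∀ y ∈ Metric.ball x r, HasFDerivWithinAt
        (fun y => h y - fderiv ℝ h x y) (fderiv ℝ h y - fderiv ℝ h x) (Metric.ball x r) y := by
      intro y hy
      have hyX : y ∈ X := hballX hy
      have hdy : DifferentiableAt ℝ h y :=
        ((hC1.differentiableOn one_ne_zero).differentiableAt (hX.mem_nhds hyX))
      exact (hdy.hasFDerivAt.sub ((fderiv ℝ h x).hasFDerivAt)).hasFDerivWithinAt
    have hbound : ∀ y ∈ Metric.ball x r, ‖fderiv ℝ h y - fderiv ℝ h x‖ ≤ ε' := by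
      intro y hy
      have : dist y x < r₁ := lt_of_lt_of_le (Metric.mem_ball.1 hy) hrle1
      have := hball this
      rw [dist_eq_norm] at this
      exact this.le
    have hmv := Convex.norm_image_sub_le_of_norm_hasFDerivWithin_le
      hdiffball hbound (convex_ball x r) h1 h2
    -- algebra
    have hba : b - a = (t ^ 2 / 2) • z := by
      rw [hb, ha]; abel
    have hφ : (h b - fderiv ℝ h x b) - (h a - fderiv ℝ h x a)
        = h b - h a - (t ^ 2 / 2) * fderiv ℝ h x z := by
      have : fderiv ℝ h x b - fderiv ℝ h x a = (t ^ 2 / 2) * fderiv ℝ h x z := by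
        rw [← ContinuousLinearMap.map_sub, hba, ContinuousLinearMap.map_smul, smul_eq_mul]
      linarith [this]
    have hnorm : ‖b - a‖ = t ^ 2 / 2 * ‖z‖ := by
      rw [hba, norm_smul]
      congr 1
      rw [Real.norm_eq_abs, abs_of_nonneg (by positivity)]
    rw [hφ, hnorm] at hmv
    rw [Real.dist_eq]
    have ht2 : (0:ℝ) < t ^ 2 := by positivity
    have key : 2 / t ^ 2 * (h b - h a) - fderiv ℝ h x z
        = 2 / t ^ 2 * (h b - h a - t ^ 2 / 2 * fderiv ℝ h x z) := by
      field_simp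
    rw [key, abs_mul, abs_of_nonneg (by positivity : (0:ℝ) ≤ 2 / t ^ 2)]
    calc 2 / t ^ 2 * |h b - h a - t ^ 2 / 2 * fderiv ℝ h x z|
        ≤ 2 / t ^ 2 * (ε' * (t ^ 2 / 2 * ‖z‖)) := by
          apply mul_le_mul_of_nonneg_left _ (by positivity)
          rw [← Real.norm_eq_abs]
          exact hmv
      _ = ε' * ‖z‖ := by
          rw [← mul_assoc, mul_comm (2 / t ^ 2) ε', mul_assoc, ← mul_assoc (2 / t^2),
            div_mul_div_comm, mul_comm (2:ℝ) (t ^ 2)]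
          rw [div_self (by positivity : t ^ 2 * 2 ≠ 0), one_mul]
      _ < ε := by
          have hle : ε' * ‖z‖ ≤ ε' * (‖z‖ + 1) :=
            mul_le_mul_of_nonneg_left (by linarith [norm_nonneg z]) hε'.le
          linarith [hε'ne]
  have heq : ∀ t : ℝ, 2 / t ^ 2 * (h (x + t • d + (t ^ 2 / 2) • z) - h x - t * fderiv ℝ h x d)
      = 2 / t ^ 2 * (h (x + t • d) - h x - t * fderiv ℝ h x d)
        + 2 / t ^ 2 * (h (x + t • d + (t ^ 2 / 2) • z) - h (x + t • d)) := by
    intro t; ring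
  have := hdd.add hBt
  refine this.congr fun t => (heq t).symm

lemma eventually_lt_of_second_order {X : Set (Fin s → ℝ)} (hX : IsOpen X) {x : Fin s → ℝ}
    (hxX : x ∈ X) {h : (Fin s → ℝ) → ℝ} (hC1 : ContDiffOn ℝ 1 h X) {d : Fin s → ℝ} {D : ℝ}
    (hdd : HasDirDeriv2 h x d D) (z : Fin s → ℝ) (hd0 : fderiv ℝ h x d = 0)
    (hneg : D + fderiv ℝ h x z < 0) :
    ∀ᶠ t in 𝓝[>] (0:ℝ), h (x + t • d + (t ^ 2 / 2) • z) < h x := by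
  have h1 := (tendsto_expand2 hX hxX hC1 hdd z).eventually_lt_const hneg
  filter_upwards [h1, self_mem_nhdsWithin] with t ht (htpos : 0 < t)
  rw [hd0, mul_zero, sub_zero] at ht
  have h2 : (0:ℝ) < 2 / t ^ 2 := by positivity
  nlinarith

lemma eventually_lt_seq {h : (Fin s → ℝ) → ℝ} {x u : Fin s → ℝ}
    (hd : DifferentiableAt ℝ h x) {t : ℕ → ℝ} {uk : ℕ → Fin s → ℝ}
    (ht : ∀ k, 0 < t k) (ht0 : Tendsto t atTop (𝓝 0))
    (hu : Tendsto uk atTop (𝓝 u)) (hneg : fderiv ℝ h x u < 0) :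
    ∀ᶠ k in atTop, h (x + t k • uk k) < h x := by
  set L := fderiv ℝ h x with hL
  set w : ℕ → (Fin s → ℝ) := fun k => t k • uk k with hw
  have hw0 : Tendsto w atTop (𝓝 0) := by
    have := ht0.smul hu
    simpa using this
  have hlo : (fun y => h (x + y) - h x - L y) =o[𝓝 0] (fun y : Fin s → ℝ => y) :=
    hasFDerivAt_iff_isLittleO_nhds_zero.1 hd.hasFDerivAt
  have hlo2 : (fun k => h (x + w k) - h x - L (w k)) =o[atTop] (fun k => w k) :=
    hlo.comp_tendsto hw0
  have hbigO : (fun k => w k) =O[atTop] (fun k => t k) := by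
    apply Asymptotics.IsBigO.of_bound (‖u‖ + 1)
    have hev : ∀ᶠ k in atTop, ‖uk k‖ < ‖u‖ + 1 :=
      (hu.norm.eventually_lt_const (by linarith [norm_nonneg u]))
    filter_upwards [hev] with k hk
    have h1 : ‖w k‖ = t k * ‖uk k‖ := by
      rw [hw]; rw [norm_smul, Real.norm_eq_abs, abs_of_pos (ht k)]
    have h2 : ‖t k‖ = t k := by rw [Real.norm_eq_abs, abs_of_pos (ht k)]
    rw [h1, h2]
    calc t k * ‖uk k‖ ≤ t k * (‖u‖ + 1) := mul_le_mul_of_nonneg_left hk.le (ht k).le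
      _ = (‖u‖ + 1) * t k := mul_comm _ _
  have hlo3 : (fun k => h (x + w k) - h x - L (w k)) =o[atTop] (fun k => t k) :=
    hlo2.trans_isBigO hbigO
  have hdiv : Tendsto (fun k => (h (x + w k) - h x - L (w k)) / t k) atTop (𝓝 0) :=
    hlo3.tendsto_div_nhds_zero
  have hLu : Tendsto (fun k => L (uk k)) atTop (𝓝 (L u)) :=
    (L.continuous.tendsto u).comp hu
  have hsum : Tendsto (fun k => (h (x + w k) - h x) / t k) atTop (𝓝 (L u)) := by
    have := hdiv.add hLu
    rw [zero_add] at this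
    refine this.congr fun k => ?_
    have htk : t k ≠ 0 := ne_of_gt (ht k)
    have : L (w k) = t k * L (uk k) := by
      rw [hw]; simp only [ContinuousLinearMap.map_smul, smul_eq_mul]
    rw [this]
    field_simp
    ring
  have hevneg := hsum.eventually_lt_const hneg
  filter_upwards [hevneg] with k hk
  have htk := ht k
  have := div_neg_iff.1 (lt_of_lt_of_le hk le_rfl)
  rcases this with ⟨hnum, _⟩ | ⟨hnum, hden⟩
  · linarith
  · linarith


lemma clm_eq_of_vec {s n m : ℕ} (lam : Fin n → ℝ) (mu : Fin m → ℝ)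
    (F : Fin n → ((Fin s → ℝ) →L[ℝ] ℝ)) (G : Fin m → ((Fin s → ℝ) →L[ℝ] ℝ))
    (h : ∑ j, lam j • vecOf (F j) + ∑ i, mu i • vecOf (G i) = (0 : Fin s → ℝ)) :
    ∑ j, lam j • F j + ∑ i, mu i • G i = 0 := by
  ext zz
  have hdot := congrArg (fun v => v ⬝ᵥ zz) h
  simp only [add_dotProduct, zero_dotProduct] at hdot
  rw [sum_dot, sum_dot] at hdot
  simp only [vecOf_dot] at hdot
  rw [ContinuousLinearMap.add_apply, ContinuousLinearMap.sum_apply,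
    ContinuousLinearMap.sum_apply, ContinuousLinearMap.zero_apply]
  simp only [ContinuousLinearMap.smul_apply, smul_eq_mul]
  exact hdot

end Helpers

section Main
open Matrix Finset

set_option maxHeartbeats 2000000 in
/-- dual second-order KKT necessary conditions: if `x̄` is a weak local Pareto
minimizer of (VP), `d` a nonzero critical direction, Conditions (C) hold, the second-order
Zangwill CQ `cl(A(x̄,d)) = B(x̄,d)` and the Abadie CQ `L(x̄) = T(S,x̄)` hold, and the second-order
directional derivatives exist, then there exist multipliers `λ ≥ 0`, `λ ≠ 0`, `μ ≥ 0` with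
`μ_i g_i(x̄) = 0`, `Σ λ_j ∇f_j(x̄) + Σ μ_i ∇g_i(x̄) = 0`, and
`Σ λ_j f_j''(x̄,d) + Σ_{i∈I(x̄)} μ_i g_i''(x̄,d) ≥ 0`. -/
theorem statement9 {s n m : ℕ} (X : Set (Fin s → ℝ)) (hX : IsOpen X)
    (f : Fin n → (Fin s → ℝ) → ℝ) (g : Fin m → (Fin s → ℝ) → ℝ)
    (xbar d : Fin s → ℝ) (hxX : xbar ∈ X) (hfeas : ∀ i, g i xbar ≤ 0)
    -- weak local Pareto minimizer
    (hmin : ∃ U ∈ 𝓝 xbar, ∀ y ∈ U, y ∈ X → (∀ i, g i y ≤ 0) → ¬ ∀ j, f j y < f j xbar)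
    -- d is a nonzero critical direction
    (hd : d ≠ 0)
    (hcritf : ∀ j, fderiv ℝ (f j) xbar d ≤ 0)
    (hcritg : ∀ i, g i xbar = 0 → fderiv ℝ (g i) xbar d ≤ 0)
    -- Conditions (C)
    (hCont : ∀ i, g i xbar ≠ 0 → ContinuousAt (g i) xbar)
    (hfC1 : ∀ j, ContDiffOn ℝ 1 (f j) X)
    (hgC1 : ∀ i, g i xbar = 0 → ContDiffOn ℝ 1 (g i) X)
    -- existence of the second-order directional derivatives
    (fdd : Fin n → ℝ) (gdd : Fin m → ℝ)
    (hfdd : ∀ j, HasDirDeriv2 (f j) xbar d (fdd j))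
    (hgdd : ∀ i, g i xbar = 0 → HasDirDeriv2 (g i) xbar d (gdd i))
    -- second-order Zangwill constraint qualification
    (hCQ : closure (setA m g xbar d) = setB m g xbar d gdd)
    -- Abadie constraint qualification
    (hAbadie : {u : Fin s → ℝ | ∀ i, g i xbar = 0 → fderiv ℝ (g i) xbar u ≤ 0} =
      bouligandTangentCone {y | y ∈ X ∧ ∀ i, g i y ≤ 0} xbar) :
    ∃ (lam : Fin n → ℝ) (mu : Fin m → ℝ),
      (∀ j, 0 ≤ lam j) ∧ lam ≠ 0 ∧ (∀ i, 0 ≤ mu i) ∧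
      (∀ i, mu i * g i xbar = 0) ∧
      ((∑ j, lam j • fderiv ℝ (f j) xbar) + ∑ i, mu i • fderiv ℝ (g i) xbar = 0) ∧
      0 ≤ (∑ j, lam j * fdd j) + ∑ i, (if g i xbar = 0 then mu i * gdd i else 0) := by
  classical
  obtain ⟨U, hU, hminU⟩ := hmin
  rcases Nat.eq_zero_or_pos n with hn0 | hnpos
  · exact absurd (fun j => (Nat.not_lt_zero j.val (hn0 ▸ j.isLt)).elim)
      (hminU xbar (mem_of_mem_nhds hU) hxX hfeas)
  have hfdiff : ∀ j, DifferentiableAt ℝ (f j) xbar := fun j =>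
    ((hfC1 j).differentiableOn one_ne_zero).differentiableAt (hX.mem_nhds hxX)
  have hgdiff : ∀ i, g i xbar = 0 → DifferentiableAt ℝ (g i) xbar := fun i hi =>
    ((hgC1 i hi).differentiableOn one_ne_zero).differentiableAt (hX.mem_nhds hxX)
  -- Part 1 : first-order primal condition on the tangent cone
  have hprimal1 : ∀ u, u ∈ bouligandTangentCone {y | y ∈ X ∧ ∀ i, g i y ≤ 0} xbar →
      ¬ (∀ j, fderiv ℝ (f j) xbar u < 0) := by
    rintro u ⟨t, uk, htpos, ht0, huk, hmem⟩ hall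
    have hev1 : ∀ᶠ k in atTop, ∀ j, f j (xbar + t k • uk k) < f j xbar :=
      Filter.eventually_all.2 fun j => eventually_lt_seq (hfdiff j) htpos ht0 huk (hall j)
    have hx : Tendsto (fun k => xbar + t k • uk k) atTop (𝓝 xbar) := by
      have h2 : Tendsto (fun k => t k • uk k) atTop (𝓝 (0 : Fin s → ℝ)) := by
        simpa using ht0.smul huk
      simpa using (tendsto_const_nhds (x := xbar) (f := atTop)).add h2
    have hev2 : ∀ᶠ k in atTop, xbar + t k • uk k ∈ U := hx hU
    obtain ⟨k, hk1, hk2⟩ := (hev1.and hev2).exists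
    exact hminU _ hk2 (hmem k).1 (hmem k).2 hk1
  -- Part 2 : second-order primal condition on the set A
  have hprimal2 : ∀ z ∈ setA m g xbar d,
      ¬ (∀ j, fderiv ℝ (f j) xbar d = 0 → fderiv ℝ (f j) xbar z + fdd j < 0) := by
    intro z hzA hall
    have hψ : Tendsto (fun t : ℝ => xbar + t • d + (t ^ 2 / 2) • z) (𝓝[>] 0) (𝓝 xbar) := by
      have hcont : Continuous fun t : ℝ => xbar + t • d + (t ^ 2 / 2) • z :=
        (continuous_const.add (continuous_id.smul continuous_const)).add
          (((continuous_pow 2).div_const 2).smul continuous_const)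
      have h0 : Tendsto (fun t : ℝ => xbar + t • d + (t ^ 2 / 2) • z) (𝓝 0) (𝓝 xbar) := by
        simpa using hcont.tendsto 0
      exact h0.mono_left nhdsWithin_le_nhds
    have hevg : ∀ᶠ t in 𝓝[>] (0:ℝ), ∀ i, g i (xbar + t • d + (t ^ 2 / 2) • z) ≤ 0 := by
      rw [Filter.eventually_all]
      intro i
      by_cases hi : g i xbar = 0
      · by_cases hidd : fderiv ℝ (g i) xbar d = 0
        · obtain ⟨δ, hδ, hδ2⟩ := hzA i hi hidd
          have hIoo : Ioo (0:ℝ) δ ∈ 𝓝[>] (0:ℝ) := Ioo_mem_nhdsGT_of_mem ⟨le_rfl, hδ⟩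
          filter_upwards [hIoo] with t ht
          exact hδ2 t ht
        · have hlt : fderiv ℝ (g i) xbar d < 0 := lt_of_le_of_ne (hcritg i hi) hidd
          filter_upwards [eventually_lt_of_deriv_neg d z (hgdiff i hi) hlt] with t ht
          rw [hi] at ht
          exact ht.le
      · have hlt : g i xbar < 0 := lt_of_le_of_ne (hfeas i) hi
        have hgc : Tendsto (fun t : ℝ => g i (xbar + t • d + (t ^ 2 / 2) • z)) (𝓝[>] 0)
            (𝓝 (g i xbar)) := (hCont i hi).tendsto.comp hψ
        filter_upwards [hgc.eventually_lt_const hlt] with t ht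
        exact ht.le
    have hevf : ∀ᶠ t in 𝓝[>] (0:ℝ), ∀ j, f j (xbar + t • d + (t ^ 2 / 2) • z) < f j xbar := by
      rw [Filter.eventually_all]
      intro j
      by_cases hj : fderiv ℝ (f j) xbar d = 0
      · exact eventually_lt_of_second_order hX hxX (hfC1 j) (hfdd j) z hj (by linarith [hall j hj])
      · exact eventually_lt_of_deriv_neg d z (hfdiff j) (lt_of_le_of_ne (hcritf j) hj)
    have hevX : ∀ᶠ t in 𝓝[>] (0:ℝ), xbar + t • d + (t ^ 2 / 2) • z ∈ X :=
      hψ (hX.mem_nhds hxX)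
    have hevU : ∀ᶠ t in 𝓝[>] (0:ℝ), xbar + t • d + (t ^ 2 / 2) • z ∈ U := hψ hU
    obtain ⟨t, ⟨⟨h1, h2⟩, h3⟩, h4⟩ := (((hevg.and hevf).and hevX).and hevU).exists
    exact hminU _ h4 h3 h1 h2
  -- Part 3 : second-order primal condition on the set B (via the Zangwill CQ)
  have hprimal3 : ¬ ∃ z, z ∈ setB m g xbar d gdd ∧
      ∀ j, fderiv ℝ (f j) xbar d = 0 → fderiv ℝ (f j) xbar z + fdd j < 0 := by
    rintro ⟨z, hzB, hstrict⟩
    rw [← hCQ] at hzB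
    obtain ⟨zk, hzkA, hzk⟩ := mem_closure_iff_seq_limit.1 hzB
    have hev : ∀ᶠ k in atTop, ∀ j, fderiv ℝ (f j) xbar d = 0 →
        fderiv ℝ (f j) xbar (zk k) + fdd j < 0 := by
      rw [Filter.eventually_all]
      intro j
      by_cases hj : fderiv ℝ (f j) xbar d = 0
      · have hcv : Tendsto (fun k => fderiv ℝ (f j) xbar (zk k) + fdd j) atTop
            (𝓝 (fderiv ℝ (f j) xbar z + fdd j)) := by
          exact (((fderiv ℝ (f j) xbar).continuous.tendsto z).comp hzk).add_const _
        filter_upwards [hcv.eventually_lt_const (hstrict j hj)] with k hk _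
        exact hk
      · filter_upwards with k hk
        exact absurd hk hj
    obtain ⟨k, hk⟩ := hev.exists
    exact hprimal2 (zk k) (hzkA k) hk
  -- index sets and gradient vectors
  set F : Fin n → (Fin s → ℝ) := fun j => vecOf (fderiv ℝ (f j) xbar) with hF
  set G : Fin m → (Fin s → ℝ) := fun i => vecOf (fderiv ℝ (g i) xbar) with hG
  set Jset : Finset (Fin n) := Finset.univ.filter (fun j => fderiv ℝ (f j) xbar d = 0)
    with hJset
  set Iset : Finset (Fin m) := Finset.univ.filter (fun i => g i xbar = 0) with hIset
  set Kset : Finset (Fin m) :=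
    Finset.univ.filter (fun i => g i xbar = 0 ∧ fderiv ℝ (g i) xbar d = 0) with hKset
  have hKsub : ∀ i ∈ Kset, g i xbar = 0 ∧ fderiv ℝ (g i) xbar d = 0 := by
    intro i hi
    rw [hKset, Finset.mem_filter] at hi
    exact hi.2
  by_cases hB : (setB m g xbar d gdd).Nonempty
  · -- Case B nonempty : homogenized Motzkin
    obtain ⟨zbar, hzbar⟩ := hB
    have hinfeas : ¬ ∃ zz : Fin (s+1) → ℝ,
        ((Matrix.vecCons (-1) 0 : Fin (s+1) → ℝ) ⬝ᵥ zz < 0) ∧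
        (∀ j ∈ Jset, (Matrix.vecCons (fdd j) (F j)) ⬝ᵥ zz < 0) ∧
        (∀ i ∈ Kset, (Matrix.vecCons (gdd i) (G i)) ⬝ᵥ zz ≤ 0) := by
      rintro ⟨zz, h0, hJz, hKz⟩
      have hτ : 0 < zz 0 := by
        have he : (Matrix.vecCons (-1) 0 : Fin (s+1) → ℝ) ⬝ᵥ zz = -(zz 0) := by
          rw [Matrix.cons_dotProduct, zero_dotProduct]
          simp [Matrix.vecHead]
        rw [he] at h0
        linarith
      set τ := zz 0 with hτdef
      set z : Fin s → ℝ := τ⁻¹ • Matrix.vecTail zz with hzdef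
      apply hprimal3
      refine ⟨z, ?_, ?_⟩
      · intro i hi hid
        have hiK : i ∈ Kset := by
          rw [hKset, Finset.mem_filter]
          exact ⟨Finset.mem_univ _, hi, hid⟩
        have hKzi := hKz i hiK
        rw [Matrix.cons_dotProduct] at hKzi
        have hGz : fderiv ℝ (g i) xbar z = τ⁻¹ * (G i ⬝ᵥ Matrix.vecTail zz) := by
          rw [hzdef, ContinuousLinearMap.map_smul, smul_eq_mul, hG, vecOf_dot]
        have hhead : Matrix.vecHead zz = τ := rfl
        rw [hhead] at hKzi
        have h1 : τ⁻¹ * (gdd i * τ + G i ⬝ᵥ Matrix.vecTail zz) ≤ 0 :=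
          mul_nonpos_of_nonneg_of_nonpos (inv_nonneg.2 hτ.le) hKzi
        have h2 : τ⁻¹ * (gdd i * τ + G i ⬝ᵥ Matrix.vecTail zz)
            = τ⁻¹ * (G i ⬝ᵥ Matrix.vecTail zz) + gdd i := by
          field_simp
          ring
        rw [h2] at h1
        rw [hGz]
        linarith
      · intro j hjd
        have hjJ : j ∈ Jset := by
          rw [hJset, Finset.mem_filter]
          exact ⟨Finset.mem_univ _, hjd⟩
        have hJzj := hJz j hjJ
        rw [Matrix.cons_dotProduct] at hJzj
        have hFz : fderiv ℝ (f j) xbar z = τ⁻¹ * (F j ⬝ᵥ Matrix.vecTail zz) := by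
          rw [hzdef, ContinuousLinearMap.map_smul, smul_eq_mul, hF, vecOf_dot]
        have hhead : Matrix.vecHead zz = τ := rfl
        rw [hhead] at hJzj
        have h1 : τ⁻¹ * (fdd j * τ + F j ⬝ᵥ Matrix.vecTail zz) < 0 :=
          mul_neg_of_pos_of_neg (inv_pos.2 hτ) hJzj
        have h2 : τ⁻¹ * (fdd j * τ + F j ⬝ᵥ Matrix.vecTail zz)
            = τ⁻¹ * (F j ⬝ᵥ Matrix.vecTail zz) + fdd j := by
          field_simp
          ring
        rw [h2] at h1
        rw [hFz]
        linarith
    obtain ⟨lam0, lam, mu, hlam00, hlam0, hmu0, hlamJ, hmuK, hsum1, hvec⟩ :=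
      gordan_cons (Matrix.vecCons (-1) 0) (fun j => Matrix.vecCons (fdd j) (F j))
        (fun i => Matrix.vecCons (gdd i) (G i)) Jset Kset hinfeas
    have hcoord0 : -lam0 + (∑ j, lam j * fdd j) + ∑ i, mu i * gdd i = 0 := by
      have hc := congrFun hvec 0
      simp only [Pi.add_apply, Pi.smul_apply, Finset.sum_apply, Matrix.cons_val_zero,
        smul_eq_mul, Pi.zero_apply] at hc
      linarith [hc]
    have htail : ∑ j, lam j • F j + ∑ i, mu i • G i = (0 : Fin s → ℝ) := by
      funext k
      have hc := congrFun hvec k.succ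
      simp only [Pi.add_apply, Pi.smul_apply, Finset.sum_apply, Matrix.cons_val_succ,
        smul_eq_mul, Pi.zero_apply] at hc
      simp only [Pi.add_apply, Pi.smul_apply, Finset.sum_apply, smul_eq_mul, Pi.zero_apply]
      simpa using hc
    have hCLM := clm_eq_of_vec lam mu _ _ htail
    have hmusupp : ∀ i, g i xbar ≠ 0 → mu i = 0 := by
      intro i hgi
      apply hmuK
      rw [hKset, Finset.mem_filter]
      push_neg
      intro _ hgeq
      exact absurd hgeq hgi
    have hlamne : lam ≠ 0 := by
      intro hlam
      rw [hlam] at hsum1 hcoord0 hCLM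
      simp only [Pi.zero_apply, zero_mul, zero_smul, Finset.sum_const_zero, add_zero,
        zero_add] at hsum1 hcoord0 hCLM
      -- now lam0 = 1, ∑ mu gdd = lam0, ∑ mu • G = 0 (as CLMs)
      have hmugdd : ∑ i, mu i * gdd i = 1 := by rw [← hsum1]; linarith
      have happ : ∑ i, mu i * (fderiv ℝ (g i) xbar zbar) = 0 := by
        have := congrArg (fun (φ : (Fin s → ℝ) →L[ℝ] ℝ) => φ zbar) hCLM
        simpa [ContinuousLinearMap.sum_apply, ContinuousLinearMap.smul_apply] using this
      have hsum_nonpos : ∑ i, mu i * (fderiv ℝ (g i) xbar zbar + gdd i) ≤ 0 := by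
        apply Finset.sum_nonpos
        intro i _
        by_cases hiK : i ∈ Kset
        · obtain ⟨hgi, hgd⟩ := hKsub i hiK
          exact mul_nonpos_of_nonneg_of_nonpos (hmu0 i) (hzbar i hgi hgd)
        · rw [hmuK i hiK, zero_mul]
      have hexpand : ∑ i, mu i * (fderiv ℝ (g i) xbar zbar + gdd i)
          = (∑ i, mu i * (fderiv ℝ (g i) xbar zbar)) + ∑ i, mu i * gdd i := by
        rw [← Finset.sum_add_distrib]
        refine Finset.sum_congr rfl fun i _ => ?_
        ring
      rw [hexpand, happ, hmugdd] at hsum_nonpos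
      linarith
    refine ⟨lam, mu, hlam0, hlamne, hmu0, ?_, hCLM, ?_⟩
    · intro i
      by_cases hgi : g i xbar = 0
      · rw [hgi, mul_zero]
      · rw [hmusupp i hgi, zero_mul]
    · have hgoal : ∑ i, (if g i xbar = 0 then mu i * gdd i else 0) = ∑ i, mu i * gdd i := by
        refine Finset.sum_congr rfl fun i _ => ?_
        by_cases hgi : g i xbar = 0
        · rw [if_pos hgi]
        · rw [if_neg hgi, hmusupp i hgi, zero_mul]
      rw [hgoal]
      linarith [hlam00, hcoord0]
  · -- Case B empty
    -- first-order multipliers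
    have hinf1 : ¬ ∃ z : Fin s → ℝ, (∀ j ∈ (Finset.univ : Finset (Fin n)), F j ⬝ᵥ z < 0) ∧
        (∀ i ∈ Iset, G i ⬝ᵥ z ≤ 0) := by
      rintro ⟨z, hJz, hIz⟩
      have hzL : z ∈ {u : Fin s → ℝ | ∀ i, g i xbar = 0 → fderiv ℝ (g i) xbar u ≤ 0} := by
        intro i hi
        have := hIz i (by rw [hIset, Finset.mem_filter]; exact ⟨Finset.mem_univ _, hi⟩)
        rwa [hG, vecOf_dot] at this
      rw [hAbadie] at hzL
      refine hprimal1 z hzL fun j => ?_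
      have := hJz j (Finset.mem_univ _)
      rwa [hF, vecOf_dot] at this
    obtain ⟨lam, mu0, hlam0, hmu00, _, hmu0I, hlamsum, hvec1⟩ :=
      gordan F G Finset.univ Iset (Finset.univ_nonempty_iff.2 ⟨⟨0, hnpos⟩⟩) hinf1
    have hCLM1 := clm_eq_of_vec lam mu0 _ _ hvec1
    -- Farkas for the (empty) set B
    have hinf2 : ¬ ∃ zz : Fin (s+1) → ℝ,
        ((Matrix.vecCons (-1) 0 : Fin (s+1) → ℝ) ⬝ᵥ zz < 0) ∧
        (∀ j ∈ (∅ : Finset (Fin 0)), (Fin.elim0 j : Fin (s+1) → ℝ) ⬝ᵥ zz < 0) ∧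
        (∀ i ∈ Kset, (Matrix.vecCons (gdd i) (G i)) ⬝ᵥ zz ≤ 0) := by
      rintro ⟨zz, h0, _, hKz⟩
      have hτ : 0 < zz 0 := by
        have he : (Matrix.vecCons (-1) 0 : Fin (s+1) → ℝ) ⬝ᵥ zz = -(zz 0) := by
          rw [Matrix.cons_dotProduct, zero_dotProduct]
          simp [Matrix.vecHead]
        rw [he] at h0
        linarith
      set τ := zz 0 with hτdef
      set z : Fin s → ℝ := τ⁻¹ • Matrix.vecTail zz with hzdef
      apply hB
      refine ⟨z, ?_⟩
      intro i hi hid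
      have hiK : i ∈ Kset := by
        rw [hKset, Finset.mem_filter]
        exact ⟨Finset.mem_univ _, hi, hid⟩
      have hKzi := hKz i hiK
      rw [Matrix.cons_dotProduct] at hKzi
      have hGz : fderiv ℝ (g i) xbar z = τ⁻¹ * (G i ⬝ᵥ Matrix.vecTail zz) := by
        rw [hzdef, ContinuousLinearMap.map_smul, smul_eq_mul, hG, vecOf_dot]
      have hhead : Matrix.vecHead zz = τ := rfl
      rw [hhead] at hKzi
      have h1 : τ⁻¹ * (gdd i * τ + G i ⬝ᵥ Matrix.vecTail zz) ≤ 0 :=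
        mul_nonpos_of_nonneg_of_nonpos (inv_nonneg.2 hτ.le) hKzi
      have h2 : τ⁻¹ * (gdd i * τ + G i ⬝ᵥ Matrix.vecTail zz)
          = τ⁻¹ * (G i ⬝ᵥ Matrix.vecTail zz) + gdd i := by
        field_simp
        ring
      rw [h2] at h1
      rw [hGz]
      linarith
    obtain ⟨lam0', lam', mu1, hlam00', hlam0', hmu10, _, hmu1K, hsum1', hvec2⟩ :=
      gordan_cons (Matrix.vecCons (-1) 0) (Fin.elim0 : Fin 0 → Fin (s+1) → ℝ)
        (fun i => Matrix.vecCons (gdd i) (G i)) ∅ Kset hinf2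
    have hlam0'1 : lam0' = 1 := by
      have : (∑ j : Fin 0, lam' j) = 0 := by simp
      rw [this] at hsum1'
      linarith
    have hcoord0' : ∑ i, mu1 i * gdd i = 1 := by
      have hc := congrFun hvec2 0
      simp only [Pi.add_apply, Pi.smul_apply, Finset.sum_apply, Matrix.cons_val_zero,
        smul_eq_mul, Pi.zero_apply, Finset.univ_eq_empty, Finset.sum_empty] at hc
      rw [hlam0'1] at hc
      linarith [hc]
    have htail2 : (∑ j : Fin 0, lam' j • (0 : Fin s → ℝ)) + ∑ i, mu1 i • G i
        = (0 : Fin s → ℝ) := by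
      funext k
      have hc := congrFun hvec2 k.succ
      simp only [Pi.add_apply, Pi.smul_apply, Finset.sum_apply, Matrix.cons_val_succ,
        smul_eq_mul, Pi.zero_apply, Finset.univ_eq_empty, Finset.sum_empty] at hc
      simp only [Pi.add_apply, Pi.smul_apply, Finset.sum_apply, smul_eq_mul, Pi.zero_apply,
        Finset.univ_eq_empty, Finset.sum_empty, zero_add]
      rw [hlam0'1] at hc
      simpa using hc
    have hCLM2 : ∑ i, mu1 i • fderiv ℝ (g i) xbar = 0 := by
      have h0 : ∑ i, mu1 i • vecOf (fderiv ℝ (g i) xbar) = (0 : Fin s → ℝ) := by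
        have := htail2
        simpa [hG] using this
      have := clm_eq_of_vec (fun _ : Fin 0 => (0:ℝ)) mu1
        (fun _ => (0 : (Fin s → ℝ) →L[ℝ] ℝ)) (fun i => fderiv ℝ (g i) xbar) (by simpa using h0)
      simpa using this
    -- combine multipliers
    obtain ⟨base, hbase⟩ : ∃ b : ℝ, b = (∑ j, lam j * fdd j) + ∑ i, mu0 i * gdd i := ⟨_, rfl⟩
    obtain ⟨M, hM⟩ : ∃ M : ℝ, M = |base| := ⟨_, rfl⟩
    have hM0 : 0 ≤ M := by rw [hM]; exact abs_nonneg _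
    obtain ⟨mu, hmu'⟩ : ∃ mu : Fin m → ℝ, ∀ i, mu i = mu0 i + M * mu1 i :=
      ⟨fun i => mu0 i + M * mu1 i, fun i => rfl⟩
    have hmusupp : ∀ i, g i xbar ≠ 0 → mu i = 0 := by
      intro i hgi
      have h1 : mu0 i = 0 := by
        apply hmu0I
        rw [hIset, Finset.mem_filter]
        push_neg
        intro _
        exact hgi
      have h2 : mu1 i = 0 := by
        apply hmu1K
        rw [hKset, Finset.mem_filter]
        push_neg
        intro _ hgeq
        exact absurd hgeq hgi
      rw [hmu' i, h1, h2]
      ring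
    have hlamne : lam ≠ 0 := by
      intro hlam
      rw [hlam] at hlamsum
      simp at hlamsum
    refine ⟨lam, mu, hlam0, hlamne, ?_, ?_, ?_, ?_⟩
    · intro i
      have h1 := mul_nonneg hM0 (hmu10 i)
      have h2 := hmu00 i
      rw [hmu' i]
      exact add_nonneg (hmu00 i) (mul_nonneg hM0 (hmu10 i))
    · intro i
      by_cases hgi : g i xbar = 0
      · rw [hgi, mul_zero]
      · rw [hmusupp i hgi, zero_mul]
    · -- first-order condition
      have hsplit : ∑ i, mu i • fderiv ℝ (g i) xbar
          = (∑ i, mu0 i • fderiv ℝ (g i) xbar) + M • ∑ i, mu1 i • fderiv ℝ (g i) xbar := by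
        rw [Finset.smul_sum, ← Finset.sum_add_distrib]
        refine Finset.sum_congr rfl fun i _ => ?_
        rw [hmu' i, add_smul, smul_smul]
      rw [hsplit, hCLM2, smul_zero, add_zero]
      exact hCLM1
    · -- second-order condition
      have hgoal : ∑ i, (if g i xbar = 0 then mu i * gdd i else 0) = ∑ i, mu i * gdd i := by
        refine Finset.sum_congr rfl fun i _ => ?_
        by_cases hgi : g i xbar = 0
        · rw [if_pos hgi]
        · rw [if_neg hgi, hmusupp i hgi, zero_mul]
      rw [hgoal]
      have hsplit2 : ∑ i, mu i * gdd i = (∑ i, mu0 i * gdd i) + M * ∑ i, mu1 i * gdd i := by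
        rw [Finset.mul_sum, ← Finset.sum_add_distrib]
        refine Finset.sum_congr rfl fun i _ => ?_
        rw [hmu' i]
        ring
      rw [hsplit2, hcoord0', mul_one]
      have habs := neg_abs_le base
      rw [← hM] at habs
      linarith


end Main
end
end

section
/- (Dual second-order KKT conditions for the scalar problem.) Let x̄ be a local minimizer of the scalar problem (P) (i.e., n = 1) and let d be a nonzero critical direction at x̄. Suppose Conditions (C) are satisfied, and assume both the second-order Zangwill constraint qualification cl(A(x̄,d)) = B(x̄,d) and the Guignard constraint qualification L(x̄) = PT(S,x̄) hold (and that the second-order directional derivatives f''(x̄,d) and g_i''(x̄,d), i ∈ I(x̄), exist). Then there exist nonnegative Lagrange multipliers μ_1,…,μ_m ≥ 0 such that μ_i g_i(x̄) = 0 for i = 1,…,m, ∇f(x̄) + Σ_{i=1}^m μ_i ∇g_i(x̄) = 0, and f''(x̄,d) + Σ_{i ∈ I(x̄)} μ_i g_i''(x̄,d) ≥ 0. -/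
open Set Filter Topology
open scoped Classical

noncomputable section

/-- The pseudotangent cone: the closed convex hull of the Bouligand tangent cone. -/
def pseudoTangentCone {s : ℕ} (S : Set (Fin s → ℝ)) (x : Fin s → ℝ) :
    Set (Fin s → ℝ) :=
  closure (convexHull ℝ (bouligandTangentCone S x))

lemma farkas_induction : ∀ (n : ℕ) {E : Type} [AddCommGroup E] [Module ℝ E]
    (a : Fin n → E →ₗ[ℝ] ℝ) (b : E →ₗ[ℝ] ℝ),
    (∀ u, (∀ i, a i u ≤ 0) → b u ≤ 0) →
    ∃ l : Fin n → ℝ, (∀ i, 0 ≤ l i) ∧ ∀ u, b u = ∑ i, l i * a i u := by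
  intro n
  induction n with
  | zero =>
    intro E _ _ a b h
    refine ⟨0, fun i => le_rfl, fun u => ?_⟩
    have h1 := h u (fun i => i.elim0)
    have h2 := h (-u) (fun i => i.elim0)
    rw [map_neg] at h2
    simp only [Finset.univ_eq_empty, Finset.sum_empty]
    linarith
  | succ n ih =>
    intro E _ _ a b h
    by_cases hcase : ∀ u, (∀ i : Fin n, a i.castSucc u ≤ 0) → b u ≤ 0
    · obtain ⟨l, hl, hlb⟩ := ih (fun i => a i.castSucc) b hcase
      refine ⟨Fin.snoc l 0, ?_, fun u => ?_⟩
      · intro i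
        refine Fin.lastCases ?_ (fun j => ?_) i
        · simp
        · simp [Fin.snoc_castSucc]; exact hl j
      · rw [Fin.sum_univ_castSucc]
        simp only [Fin.snoc_castSucc, Fin.snoc_last, zero_mul, add_zero]
        exact hlb u
    · push_neg at hcase
      obtain ⟨w, hw, hbw⟩ := hcase
      have haw : 0 < a (Fin.last n) w := by
        by_contra hle
        push_neg at hle
        have := h w (fun i => Fin.lastCases hle (fun j => hw j) i)
        linarith
      set aL := a (Fin.last n) with haL
      -- transformed functionals
      have key : ∀ u, (∀ i : Fin n,
          (a i.castSucc - (a i.castSucc w / aL w) • aL) u ≤ 0) →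
          (b - (b w / aL w) • aL) u ≤ 0 := by
        intro u hu
        set v := u - (aL u / aL w) • w with hv
        have hvL : aL v = 0 := by
          simp [hv, map_sub, map_smul, smul_eq_mul]
          field_simp
          ring
        have hvi : ∀ i : Fin n, a i.castSucc v =
            (a i.castSucc - (a i.castSucc w / aL w) • aL) u := by
          intro i
          simp [hv, map_sub, map_smul, smul_eq_mul, LinearMap.sub_apply,
            LinearMap.smul_apply]
          field_simp
        have hball : ∀ j : Fin (n+1), a j v ≤ 0 := by
          intro j
          refine Fin.lastCases ?_ (fun i => ?_) j
          · rw [← haL, hvL]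
          · rw [hvi i]; exact hu i
        have hbv := h v hball
        have hbv' : b v = (b - (b w / aL w) • aL) u := by
          simp [hv, map_sub, map_smul, smul_eq_mul, LinearMap.sub_apply,
            LinearMap.smul_apply]
          field_simp
        rw [← hbv']
        exact hbv
      obtain ⟨l, hl, hlb⟩ := ih (fun i => a i.castSucc - (a i.castSucc w / aL w) • aL)
        (b - (b w / aL w) • aL) key
      set μL := (b w - ∑ i, l i * a i.castSucc w) / aL w with hμL
      have hμLnn : 0 ≤ μL := by
        apply div_nonneg _ (le_of_lt haw)
        have : ∑ i, l i * a i.castSucc w ≤ 0 :=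
          Finset.sum_nonpos (fun i _ => mul_nonpos_of_nonneg_of_nonpos (hl i) (hw i))
        linarith
      refine ⟨Fin.snoc l μL, ?_, fun u => ?_⟩
      · intro i
        refine Fin.lastCases ?_ (fun j => ?_) i
        · simpa using hμLnn
        · simpa using hl j
      · rw [Fin.sum_univ_castSucc]
        simp only [Fin.snoc_castSucc, Fin.snoc_last]
        have h1 := hlb u
        simp only [LinearMap.sub_apply, LinearMap.smul_apply, smul_eq_mul] at h1
        -- h1 : b u - b w / aL w * aL u = ∑ i, l i * (a i.castSucc u - a i.castSucc w / aL w * aL u)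
        have h2 : ∑ i, l i * (a i.castSucc u - a i.castSucc w / aL w * aL u)
            = ∑ i, l i * a i.castSucc u - (∑ i, l i * a i.castSucc w) / aL w * aL u := by
          rw [Finset.sum_div, Finset.sum_mul, ← Finset.sum_sub_distrib]
          congr 1
          ext i
          field_simp
        rw [h2] at h1
        rw [hμL]
        have hawne : aL w ≠ 0 := ne_of_gt haw
        field_simp at h1 ⊢
        linarith

set_option maxHeartbeats 4000000 in
/-- dual second-order KKT conditions for the scalar problem (P): if `x̄` is a
local minimizer of (P), `d` a nonzero critical direction, Conditions (C) hold, the second-order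
Zangwill CQ `cl(A(x̄,d)) = B(x̄,d)` and the Guignard CQ `L(x̄) = PT(S,x̄)` hold, and the
second-order directional derivatives exist, then there exist multipliers `μ ≥ 0` with
`μ_i g_i(x̄) = 0`, `∇f(x̄) + Σ μ_i ∇g_i(x̄) = 0`, and
`f''(x̄,d) + Σ_{i∈I(x̄)} μ_i g_i''(x̄,d) ≥ 0`. -/
theorem statement10 {s m : ℕ} (X : Set (Fin s → ℝ)) (hX : IsOpen X)
    (f : (Fin s → ℝ) → ℝ) (g : Fin m → (Fin s → ℝ) → ℝ)
    (xbar d : Fin s → ℝ) (hxX : xbar ∈ X) (hfeas : ∀ i, g i xbar ≤ 0)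
    -- local minimizer of the scalar problem (P)
    (hmin : ∃ U ∈ 𝓝 xbar, ∀ y ∈ U, y ∈ X → (∀ i, g i y ≤ 0) → f xbar ≤ f y)
    -- d is a nonzero critical direction
    (hd : d ≠ 0)
    (hcritf : fderiv ℝ f xbar d ≤ 0)
    (hcritg : ∀ i, g i xbar = 0 → fderiv ℝ (g i) xbar d ≤ 0)
    -- Conditions (C)
    (hCont : ∀ i, g i xbar ≠ 0 → ContinuousAt (g i) xbar)
    (hfC1 : ContDiffOn ℝ 1 f X)
    (hgC1 : ∀ i, g i xbar = 0 → ContDiffOn ℝ 1 (g i) X)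
    -- existence of the second-order directional derivatives
    (fdd : ℝ) (gdd : Fin m → ℝ)
    (hfdd : HasDirDeriv2 f xbar d fdd)
    (hgdd : ∀ i, g i xbar = 0 → HasDirDeriv2 (g i) xbar d (gdd i))
    -- second-order Zangwill constraint qualification
    (hCQ : closure (setA m g xbar d) = setB m g xbar d gdd)
    -- Guignard constraint qualification
    (hGuignard : {u : Fin s → ℝ | ∀ i, g i xbar = 0 → fderiv ℝ (g i) xbar u ≤ 0} =
      pseudoTangentCone {y | y ∈ X ∧ ∀ i, g i y ≤ 0} xbar) :
    ∃ mu : Fin m → ℝ,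
      (∀ i, 0 ≤ mu i) ∧
      (∀ i, mu i * g i xbar = 0) ∧
      (fderiv ℝ f xbar + ∑ i, mu i • fderiv ℝ (g i) xbar = 0) ∧
      0 ≤ fdd + ∑ i, (if g i xbar = 0 then mu i * gdd i else 0) := by
    classical
  obtain ⟨U, hU, hUmin⟩ := hmin
  have hfd : DifferentiableAt ℝ f xbar :=
    (hfC1.contDiffAt (hX.mem_nhds hxX)).differentiableAt one_ne_zero
  have hgdiff : ∀ i, g i xbar = 0 → DifferentiableAt ℝ (g i) xbar := fun i hi =>
    ((hgC1 i hi).contDiffAt (hX.mem_nhds hxX)).differentiableAt one_ne_zero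
  set Df := fderiv ℝ f xbar with hDf
  set Dg : Fin m → (Fin s → ℝ) →L[ℝ] ℝ := fun i => fderiv ℝ (g i) xbar with hDg
  have hDgdef : ∀ i, fderiv ℝ (g i) xbar = Dg i := fun i => rfl
  -- First-order primal inequality (from Guignard CQ and local minimality)
  have hP1 : ∀ u : Fin s → ℝ, (∀ i, g i xbar = 0 → Dg i u ≤ 0) → 0 ≤ Df u := by
    intro u hu
    have hmem : u ∈ pseudoTangentCone {y | y ∈ X ∧ ∀ i, g i y ≤ 0} xbar := by
      rw [← hGuignard]; exact hu
    have hconv : Convex ℝ {v : Fin s → ℝ | 0 ≤ Df v} :=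
      convex_halfSpace_ge ⟨fun a b => Df.map_add a b, fun c a => Df.map_smul c a⟩ 0
    have hclosed : IsClosed {v : Fin s → ℝ | 0 ≤ Df v} :=
      isClosed_le continuous_const Df.continuous
    have hT : bouligandTangentCone {y | y ∈ X ∧ ∀ i, g i y ≤ 0} xbar ⊆
        {v : Fin s → ℝ | 0 ≤ Df v} := by
      rintro v ⟨t, uk, ht, ht0, huk, hS⟩
      have hq : Tendsto (fun k => t k • uk k) atTop (𝓝 0) := by
        have := ht0.smul huk; rwa [zero_smul] at this
      have htends : Tendsto (fun k => xbar + t k • uk k) atTop (𝓝 xbar) := by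
        have h0 : Tendsto (fun _ : ℕ => xbar) atTop (𝓝 xbar) := tendsto_const_nhds
        have := h0.add hq
        simpa using this
      have hlo : (fun h : Fin s → ℝ => f (xbar + h) - f xbar - Df h) =o[𝓝 0]
          (fun h => h) := hasFDerivAt_iff_isLittleO_nhds_zero.1 hfd.hasFDerivAt
      have hnum : (fun k => f (xbar + t k • uk k) - f xbar - Df (t k • uk k))
          =o[atTop] (fun k => t k • uk k) := hlo.comp_tendsto hq
      have hOb : (fun k => t k • uk k) =O[atTop] t := by
        apply Asymptotics.IsBigO.of_bound (‖v‖ + 1)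
        have hn : Tendsto (fun k => ‖uk k‖) atTop (𝓝 ‖v‖) := huk.norm
        filter_upwards [hn.eventually_lt_const (lt_add_one ‖v‖)] with k hk
        rw [norm_smul, Real.norm_eq_abs]
        calc |t k| * ‖uk k‖ ≤ |t k| * (‖v‖ + 1) := by
              apply mul_le_mul_of_nonneg_left hk.le (abs_nonneg _)
          _ = (‖v‖ + 1) * |t k| := mul_comm _ _
          _ = (‖v‖ + 1) * ‖t k‖ := by rw [Real.norm_eq_abs]
      have hdiv := (hnum.trans_isBigO hOb).tendsto_div_nhds_zero
      have hDfuk : Tendsto (fun k => Df (uk k)) atTop (𝓝 (Df v)) :=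
        (Df.continuous.tendsto v).comp huk
      have hlim : Tendsto (fun k => (f (xbar + t k • uk k) - f xbar) / t k) atTop
          (𝓝 (Df v)) := by
        have hcomb := hdiv.add hDfuk
        rw [zero_add] at hcomb
        refine Tendsto.congr (fun k => ?_) hcomb
        have htk : t k ≠ 0 := (ht k).ne'
        rw [map_smul, smul_eq_mul]
        field_simp
        ring
      refine ge_of_tendsto hlim ?_
      filter_upwards [htends.eventually_mem hU] with k hkU
      have hfk := hUmin _ hkU (hS k).1 (hS k).2
      exact div_nonneg (by linarith) (ht k).le
    exact closure_minimal (convexHull_min hT hconv) hclosed hmem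
  -- Second-order primal inequality (from Zangwill CQ and local minimality)
  have hP2 : ∀ z ∈ setB m g xbar d gdd, 0 ≤ Df z + fdd := by
    have hsub : setA m g xbar d ⊆ {z : Fin s → ℝ | 0 ≤ Df z + fdd} := by
      intro z hz
      set c : ℝ → (Fin s → ℝ) := fun t => xbar + t • d + (t ^ 2 / 2) • z with hc
      have hccont : Continuous c := by fun_prop
      have hc00 : c 0 = xbar := by simp [hc]
      have hc0 : Tendsto c (𝓝[>] (0:ℝ)) (𝓝 xbar) := by
        have := hccont.tendsto 0
        rw [hc00] at this
        exact this.mono_left nhdsWithin_le_nhds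
      have hfeasev : ∀ i : Fin m, ∀ᶠ t in 𝓝[>] (0:ℝ), g i (c t) ≤ 0 := by
        intro i
        by_cases hgi : g i xbar = 0
        · by_cases hdgi : Dg i d = 0
          · obtain ⟨δ, hδ, hδ2⟩ := hz i hgi hdgi
            filter_upwards [Ioo_mem_nhdsGT hδ] with t htIoo
            exact hδ2 t htIoo
          · have hlt : Dg i d < 0 := lt_of_le_of_ne (hcritg i hgi) hdgi
            have hcd : HasDerivAt c d 0 := by
              have h1 : HasDerivAt (fun t : ℝ => xbar + t • d) d 0 := by
                have := ((hasDerivAt_id (0:ℝ)).smul_const d).const_add xbar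
                simpa using this
              have h2 : HasDerivAt (fun t : ℝ => (t ^ 2 / 2) • z) ((0:ℝ) • z) 0 := by
                have := ((hasDerivAt_pow 2 (0:ℝ)).div_const 2).smul_const z
                simpa using this
              have := h1.add h2
              simp only [zero_smul, add_zero] at this
              exact this
            have hψ : HasDerivAt (fun t => g i (c t)) (Dg i d) 0 := by
              have hgd' : HasFDerivAt (g i) (Dg i) (c 0) := by
                rw [hc00]; exact (hgdiff i hgi).hasFDerivAt
              exact hgd'.comp_hasDerivAt 0 hcd
            have hslope : Tendsto (fun t => g i (c t) / t) (𝓝[>] (0:ℝ)) (𝓝 (Dg i d)) := by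
              have hsl := hasDerivAt_iff_tendsto_slope.1 hψ
              have h2 := hsl.mono_left
                (nhdsWithin_mono 0 (fun t (ht : t ∈ Ioi (0:ℝ)) => ne_of_gt ht))
              refine h2.congr' ?_
              filter_upwards [self_mem_nhdsWithin] with t ht
              rw [slope_def_field]
              rw [hc00, hgi]
              ring_nf
            filter_upwards [hslope.eventually_lt_const hlt, self_mem_nhdsWithin]
              with t h1 (h2 : t ∈ Ioi (0:ℝ))
            have h3 : g i (c t) = (g i (c t) / t) * t :=
              (div_mul_cancel₀ _ (ne_of_gt h2)).symm
            rw [h3]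
            exact (mul_neg_of_neg_of_pos h1 h2).le
        · have hlt : g i xbar < 0 := lt_of_le_of_ne (hfeas i) hgi
          have htendg : Tendsto (fun t => g i (c t)) (𝓝[>] (0:ℝ)) (𝓝 (g i xbar)) :=
            (hCont i hgi).tendsto.comp hc0
          filter_upwards [htendg.eventually_lt_const hlt] with t hti
          exact hti.le
      have hXev : ∀ᶠ t in 𝓝[>] (0:ℝ), c t ∈ X := hc0.eventually_mem (hX.mem_nhds hxX)
      have hUev : ∀ᶠ t in 𝓝[>] (0:ℝ), c t ∈ U := hc0.eventually_mem hU
      have hfev : ∀ᶠ t in 𝓝[>] (0:ℝ), f xbar ≤ f (c t) := by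
        filter_upwards [hXev, hUev, eventually_all.2 hfeasev] with t h1 h2 h3
        exact hUmin _ h2 h1 h3
      have hstrict : HasStrictFDerivAt f Df xbar :=
        (hfC1.contDiffAt (hX.mem_nhds hxX)).hasStrictFDerivAt one_ne_zero
      have hq : Tendsto (fun t : ℝ => (c t, xbar + t • d)) (𝓝[>] (0:ℝ))
          (𝓝 (xbar, xbar)) := by
        apply Tendsto.prodMk_nhds hc0
        have hcont2 : Continuous (fun t : ℝ => xbar + t • d) := by fun_prop
        have := hcont2.tendsto 0
        simp only [zero_smul, add_zero] at this
        exact this.mono_left nhdsWithin_le_nhds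
      have hnum : (fun t => f (c t) - f (xbar + t • d) - Df (c t - (xbar + t • d)))
          =o[𝓝[>] (0:ℝ)] (fun t => c t - (xbar + t • d)) :=
        hstrict.isLittleO.comp_tendsto hq
      have hdiffc : ∀ t : ℝ, c t - (xbar + t • d) = (t ^ 2 / 2) • z := by
        intro t
        rw [hc]
        exact add_sub_cancel_left _ _
      have hO : (fun t : ℝ => c t - (xbar + t • d)) =O[𝓝[>] (0:ℝ)]
          (fun t => t ^ 2) := by
        apply Asymptotics.IsBigO.of_bound (‖z‖ / 2)
        filter_upwards [self_mem_nhdsWithin] with t (ht : t ∈ Ioi (0:ℝ))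
        rw [hdiffc t, norm_smul, Real.norm_eq_abs, Real.norm_eq_abs,
          abs_of_nonneg (by positivity : (0:ℝ) ≤ t ^ 2 / 2),
          abs_of_nonneg (by positivity : (0:ℝ) ≤ t ^ 2)]
        apply le_of_eq
        ring
      have hdiv := ((hnum.trans_isBigO hO).tendsto_div_nhds_zero)
      have hGlim : Tendsto (fun t : ℝ => 2 / t ^ 2 * (f (xbar + t • d) - f xbar - t * Df d))
          (𝓝[>] (0:ℝ)) (𝓝 fdd) := hfdd
      have hFlim : Tendsto (fun t => 2 / t ^ 2 * (f (c t) - f xbar - t * Df d))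
          (𝓝[>] (0:ℝ)) (𝓝 (fdd + Df z)) := by
        have hDfz : Tendsto (fun _ : ℝ => Df z) (𝓝[>] (0:ℝ)) (𝓝 (Df z)) :=
          tendsto_const_nhds
        have hcomb := (hdiv.const_mul 2).add (hGlim.add hDfz)
        rw [mul_zero, zero_add] at hcomb
        refine Tendsto.congr' ?_ hcomb
        filter_upwards [self_mem_nhdsWithin] with t (ht : t ∈ Ioi (0:ℝ))
        have ht0 : (t:ℝ) ≠ 0 := ne_of_gt ht
        rw [hdiffc t, map_smul, smul_eq_mul]
        field_simp
        ring
      have hFnn : ∀ᶠ t in 𝓝[>] (0:ℝ), 0 ≤ 2 / t ^ 2 * (f (c t) - f xbar - t * Df d) := by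
        filter_upwards [hfev, self_mem_nhdsWithin] with t h1 (ht : t ∈ Ioi (0:ℝ))
        have h4 : t * Df d ≤ t * 0 := mul_le_mul_of_nonneg_left hcritf ht.le
        have h2 : 0 ≤ f (c t) - f xbar - t * Df d := by nlinarith
        have h3 : 0 ≤ 2 / t ^ 2 := by positivity
        exact mul_nonneg h3 h2
      have := ge_of_tendsto hFlim hFnn
      have : 0 ≤ fdd + Df z := this
      simpa [add_comm] using this
    intro z hzB
    have hz' : z ∈ closure (setA m g xbar d) := by rw [hCQ]; exact hzB
    have hcl : closure (setA m g xbar d) ⊆ {z : Fin s → ℝ | 0 ≤ Df z + fdd} := by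
      apply closure_minimal hsub
      apply isClosed_le continuous_const
      exact (Df.continuous.add continuous_const)
    exact hcl hz'
  -- Homogenized constraint functionals on (Fin s → ℝ) × ℝ
  set A : Fin (m + 1) → ((Fin s → ℝ) × ℝ) →ₗ[ℝ] ℝ := fun j =>
    Fin.lastCases (-(LinearMap.snd ℝ (Fin s → ℝ) ℝ))
      (fun i => if g i xbar = 0 ∧ Dg i d = 0 then
        ((Dg i).toLinearMap).comp (LinearMap.fst ℝ (Fin s → ℝ) ℝ)
          + gdd i • LinearMap.snd ℝ (Fin s → ℝ) ℝ
        else 0) j with hA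
  have hAcast : ∀ (i : Fin m) (p : (Fin s → ℝ) × ℝ),
      A i.castSucc p = if g i xbar = 0 ∧ Dg i d = 0 then Dg i p.1 + gdd i * p.2 else 0 := by
    intro i p
    simp only [hA, Fin.lastCases_castSucc]
    by_cases hi : g i xbar = 0 ∧ Dg i d = 0
    · rw [if_pos hi, if_pos hi]
      simp [smul_eq_mul]
    · rw [if_neg hi, if_neg hi]
      simp
  have hAlast : ∀ p : (Fin s → ℝ) × ℝ, A (Fin.last m) p = -p.2 := by
    intro p
    simp only [hA, Fin.lastCases_last]
    simp
  by_cases hB : (setB m g xbar d gdd).Nonempty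
  · -- case B nonempty : LP duality argument
    obtain ⟨z₀, hz₀⟩ := hB
    set b1 : ((Fin s → ℝ) × ℝ) →ₗ[ℝ] ℝ :=
      -((Df.toLinearMap).comp (LinearMap.fst ℝ (Fin s → ℝ) ℝ)
        + fdd • LinearMap.snd ℝ (Fin s → ℝ) ℝ) with hb1
    have hb1eval : ∀ p : (Fin s → ℝ) × ℝ, b1 p = -(Df p.1 + fdd * p.2) := by
      intro p; rw [hb1]; simp [smul_eq_mul]
    have himp : ∀ p : (Fin s → ℝ) × ℝ, (∀ j, A j p ≤ 0) → b1 p ≤ 0 := by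
      rintro ⟨z, t⟩ hp
      have ht0 : 0 ≤ t := by
        have := hp (Fin.last m); rw [hAlast] at this
        simpa using this
      have hKz : ∀ i, g i xbar = 0 → Dg i d = 0 → Dg i z + gdd i * t ≤ 0 := by
        intro i h1 h2
        have := hp i.castSucc
        rw [hAcast i ⟨z, t⟩, if_pos ⟨h1, h2⟩] at this
        exact this
      have hgoal : 0 ≤ Df z + fdd * t := by
        rcases eq_or_lt_of_le ht0 with h | h
        · -- t = 0
          have hzray : ∀ sc : ℝ, 0 ≤ sc → 0 ≤ Df z₀ + sc * Df z + fdd := by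
            intro sc hsc
            have hmem2 : z₀ + sc • z ∈ setB m g xbar d gdd := by
              simp only [setB, Set.mem_setOf_eq]
              intro i h1 h2
              have h3 := hz₀ i h1 h2
              have h4 := hKz i h1 h2
              rw [← h, mul_zero, add_zero] at h4
              rw [map_add, map_smul, smul_eq_mul]
              have h5 : sc * Dg i z ≤ 0 := mul_nonpos_iff.mpr (Or.inl ⟨hsc, h4⟩)
              calc fderiv ℝ (g i) xbar z₀ + sc * Dg i z + gdd i
                  = (fderiv ℝ (g i) xbar z₀ + gdd i) + sc * Dg i z := by ring
                _ ≤ 0 + 0 := add_le_add h3 h5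
                _ = 0 := by ring
            have h6 := hP2 _ hmem2
            rw [map_add, map_smul, smul_eq_mul] at h6
            linarith
          have hDfz : 0 ≤ Df z := by
            by_contra hneg
            push_neg at hneg
            have hs0 := hzray 0 le_rfl
            rw [zero_mul, add_zero] at hs0
            have hW : Df z ≠ 0 := ne_of_lt hneg
            set sc := (Df z₀ + fdd + 1) / (-Df z) with hsc
            have hscnn : 0 ≤ sc := by
              rw [hsc]
              apply div_nonneg <;> linarith
            have h8 := hzray sc hscnn
            have h9 : sc * Df z = -(Df z₀ + fdd + 1) := by
              rw [hsc, div_neg, neg_mul, div_mul_cancel₀ _ hW]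
            linarith
          rw [← h, mul_zero, add_zero]
          exact hDfz
        · -- t > 0
          have ht' : t ≠ 0 := ne_of_gt h
          have hmem2 : t⁻¹ • z ∈ setB m g xbar d gdd := by
            simp only [setB, Set.mem_setOf_eq]
            intro i h1 h2
            have h4 := hKz i h1 h2
            rw [map_smul, smul_eq_mul]
            have h5 : t⁻¹ * (Dg i z + gdd i * t) ≤ 0 :=
              mul_nonpos_iff.mpr (Or.inl ⟨(inv_nonneg.mpr ht0), h4⟩)
            calc t⁻¹ * fderiv ℝ (g i) xbar z + gdd i
                = t⁻¹ * (Dg i z + gdd i * t) := by field_simp; rfl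
              _ ≤ 0 := h5
          have h6 := hP2 _ hmem2
          rw [map_smul, smul_eq_mul] at h6
          have h7 := mul_le_mul_of_nonneg_left h6 (le_of_lt h)
          rw [mul_zero] at h7
          calc (0:ℝ) ≤ t * (t⁻¹ * Df z + fdd) := h7
            _ = Df z + fdd * t := by field_simp
      rw [hb1eval]
      linarith
    obtain ⟨l, hlnn, hlb⟩ := farkas_induction (m + 1) A b1 himp
    set mu : Fin m → ℝ :=
      fun i => if g i xbar = 0 ∧ Dg i d = 0 then l i.castSucc else 0 with hmu
    have hterm : ∀ (i : Fin m) (p : (Fin s → ℝ) × ℝ),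
        l i.castSucc * A i.castSucc p = mu i * (Dg i p.1 + gdd i * p.2) := by
      intro i p
      rw [hAcast i p]
      simp only [hmu]
      by_cases hi : g i xbar = 0 ∧ Dg i d = 0
      · rw [if_pos hi, if_pos hi]
      · rw [if_neg hi, if_neg hi, mul_zero, zero_mul]
    have hsum : ∀ p : (Fin s → ℝ) × ℝ,
        -(Df p.1 + fdd * p.2)
          = (∑ i : Fin m, mu i * (Dg i p.1 + gdd i * p.2)) + l (Fin.last m) * (-p.2) := by
      intro p
      have h1 := hlb p
      rw [Fin.sum_univ_castSucc] at h1
      rw [hb1eval] at h1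
      rw [hAlast] at h1
      rw [Finset.sum_congr rfl (fun i _ => hterm i p)] at h1
      exact h1
    have hmunn : ∀ i, 0 ≤ mu i := by
      intro i
      simp only [hmu]
      by_cases hi : g i xbar = 0 ∧ Dg i d = 0
      · rw [if_pos hi]; exact hlnn _
      · rw [if_neg hi]
    have hmuactive : ∀ i, g i xbar ≠ 0 → mu i = 0 := by
      intro i hi
      simp only [hmu]; rw [if_neg (fun hc => hi hc.1)]
    refine ⟨mu, hmunn, ?_, ?_, ?_⟩
    · intro i
      by_cases hi : g i xbar = 0
      · rw [hi, mul_zero]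
      · rw [hmuactive i hi, zero_mul]
    · apply ContinuousLinearMap.ext
      intro u
      rw [ContinuousLinearMap.add_apply, ContinuousLinearMap.zero_apply,
        ContinuousLinearMap.sum_apply]
      have h1 := hsum (u, (0:ℝ))
      simp only [mul_zero, add_zero, neg_zero] at h1
      have h2 : ∑ i : Fin m, (mu i • fderiv ℝ (g i) xbar) u
          = ∑ i : Fin m, mu i * Dg i u := by
        apply Finset.sum_congr rfl
        intro i _
        rw [ContinuousLinearMap.smul_apply, smul_eq_mul, hDgdef]
      rw [h2]
      linarith
    · have h1 := hsum ((0 : Fin s → ℝ), (1:ℝ))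
      simp only [map_zero, zero_add, mul_one, mul_neg_one] at h1
      have h2 : ∑ i : Fin m, (if g i xbar = 0 then mu i * gdd i else 0)
          = ∑ i : Fin m, mu i * gdd i := by
        apply Finset.sum_congr rfl
        intro i _
        by_cases hi : g i xbar = 0
        · rw [if_pos hi]
        · rw [if_neg hi, hmuactive i hi, zero_mul]
      rw [h2]
      have h3 := hlnn (Fin.last m)
      linarith
  · -- case B empty
    have hBe : ∀ z, z ∉ setB m g xbar d gdd := fun z hz => hB ⟨z, hz⟩
    set a0 : Fin m → (Fin s → ℝ) →ₗ[ℝ] ℝ :=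
      fun i => if g i xbar = 0 then (Dg i).toLinearMap else 0 with ha0
    have himp0 : ∀ u, (∀ i, a0 i u ≤ 0) → (-(Df.toLinearMap)) u ≤ 0 := by
      intro u hu
      have h1 := hP1 u (fun i hi => by
        have h2 := hu i
        simp only [ha0, if_pos hi] at h2
        exact h2)
      simp only [LinearMap.neg_apply, ContinuousLinearMap.coe_coe]
      linarith
    obtain ⟨l0, hl0nn, hl0b⟩ := farkas_induction m a0 (-(Df.toLinearMap)) himp0
    set mu0 : Fin m → ℝ := fun i => if g i xbar = 0 then l0 i else 0 with hmu0
    have hstat0 : ∀ u, -(Df u) = ∑ i, mu0 i * Dg i u := by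
      intro u
      have h1 := hl0b u
      simp only [LinearMap.neg_apply, ContinuousLinearMap.coe_coe] at h1
      rw [h1]
      apply Finset.sum_congr rfl
      intro i _
      simp only [ha0, hmu0]
      by_cases hi : g i xbar = 0
      · simp only [if_pos hi]
        simp
      · simp only [if_neg hi]
        simp
    have himp2 : ∀ p : (Fin s → ℝ) × ℝ, (∀ j, A j p ≤ 0) →
        (LinearMap.snd ℝ (Fin s → ℝ) ℝ) p ≤ 0 := by
      rintro ⟨z, t⟩ hp
      have ht0 : 0 ≤ t := by
        have h0 := hp (Fin.last m)
        rw [hAlast] at h0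
        simp only at h0
        linarith
      rcases eq_or_lt_of_le ht0 with h | h
      · rw [LinearMap.snd_apply]
        simp only
        linarith
      · exfalso
        apply hBe (t⁻¹ • z)
        simp only [setB, Set.mem_setOf_eq]
        intro i h1 h2
        have h4 := hp i.castSucc
        rw [hAcast i ⟨z, t⟩] at h4
        rw [if_pos ⟨h1, h2⟩] at h4
        simp only at h4
        rw [map_smul, smul_eq_mul]
        have ht' : t ≠ 0 := ne_of_gt h
        have h5 : t⁻¹ * (Dg i z + gdd i * t) ≤ 0 :=
          mul_nonpos_iff.mpr (Or.inl ⟨inv_nonneg.mpr ht0, h4⟩)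
        calc t⁻¹ * fderiv ℝ (g i) xbar z + gdd i
            = t⁻¹ * (Dg i z + gdd i * t) := by
              rw [← hDgdef i]
              field_simp
          _ ≤ 0 := h5
    obtain ⟨l1, hl1nn, hl1b⟩ :=
      farkas_induction (m + 1) A (LinearMap.snd ℝ (Fin s → ℝ) ℝ) himp2
    set nu : Fin m → ℝ :=
      fun i => if g i xbar = 0 ∧ Dg i d = 0 then l1 i.castSucc else 0 with hnu
    have hterm1 : ∀ (i : Fin m) (p : (Fin s → ℝ) × ℝ),
        l1 i.castSucc * A i.castSucc p = nu i * (Dg i p.1 + gdd i * p.2) := by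
      intro i p
      rw [hAcast i p]
      simp only [hnu]
      by_cases hi : g i xbar = 0 ∧ Dg i d = 0
      · rw [if_pos hi, if_pos hi]
      · rw [if_neg hi, if_neg hi, mul_zero, zero_mul]
    have hsum1 : ∀ p : (Fin s → ℝ) × ℝ,
        p.2 = (∑ i : Fin m, nu i * (Dg i p.1 + gdd i * p.2))
          + l1 (Fin.last m) * (-p.2) := by
      intro p
      have h1 := hl1b p
      rw [Fin.sum_univ_castSucc, hAlast,
        Finset.sum_congr rfl (fun i _ => hterm1 i p)] at h1
      simpa using h1
    have hnuzero : ∀ u : Fin s → ℝ, (0:ℝ) = ∑ i, nu i * Dg i u := by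
      intro u
      have h1 := hsum1 (u, (0:ℝ))
      simpa only [mul_zero, add_zero, neg_zero] using h1
    have hnugdd : 1 + l1 (Fin.last m) = ∑ i, nu i * gdd i := by
      have h1 := hsum1 ((0 : Fin s → ℝ), (1:ℝ))
      simp only [map_zero, zero_add, mul_one, mul_neg_one] at h1
      linarith
    set cc := max 0 (-(fdd + ∑ i, (if g i xbar = 0 then mu0 i * gdd i else 0))) with hcc
    have hccnn : 0 ≤ cc := le_max_left _ _
    have hnunn : ∀ i, 0 ≤ nu i := by
      intro i
      simp only [hnu]
      by_cases hi : g i xbar = 0 ∧ Dg i d = 0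
      · rw [if_pos hi]; exact hl1nn _
      · rw [if_neg hi]
    have hmu0nn : ∀ i, 0 ≤ mu0 i := by
      intro i
      simp only [hmu0]
      by_cases hi : g i xbar = 0
      · rw [if_pos hi]; exact hl0nn _
      · rw [if_neg hi]
    refine ⟨fun i => mu0 i + cc * nu i, ?_, ?_, ?_, ?_⟩
    · intro i
      exact add_nonneg (hmu0nn i) (mul_nonneg hccnn (hnunn i))
    · intro i
      by_cases hi : g i xbar = 0
      · rw [hi, mul_zero]
      · have h1 : mu0 i = 0 := by simp only [hmu0]; rw [if_neg hi]
        have h2 : nu i = 0 := by simp only [hnu]; rw [if_neg (fun hc => hi hc.1)]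
        show (mu0 i + cc * nu i) * g i xbar = 0
        rw [h1, h2, mul_zero, add_zero, zero_mul]
    · apply ContinuousLinearMap.ext
      intro u
      rw [ContinuousLinearMap.add_apply, ContinuousLinearMap.zero_apply,
        ContinuousLinearMap.sum_apply]
      have h1 := hstat0 u
      have h2 := hnuzero u
      have h3 : ∑ i : Fin m, ((mu0 i + cc * nu i) • fderiv ℝ (g i) xbar) u
          = (∑ i, mu0 i * Dg i u) + cc * ∑ i, nu i * Dg i u := by
        rw [Finset.mul_sum, ← Finset.sum_add_distrib]
        apply Finset.sum_congr rfl
        intro i _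
        rw [ContinuousLinearMap.smul_apply, smul_eq_mul, hDgdef]
        ring
      rw [h3, ← h2, mul_zero, add_zero]
      linarith
    · have h4 : ∀ i : Fin m, (if g i xbar = 0 then (mu0 i + cc * nu i) * gdd i else 0)
          = (if g i xbar = 0 then mu0 i * gdd i else 0) + cc * (nu i * gdd i) := by
        intro i
        by_cases hi : g i xbar = 0
        · rw [if_pos hi, if_pos hi]; ring
        · have h2 : nu i = 0 := by simp only [hnu]; rw [if_neg (fun hc => hi hc.1)]
          rw [if_neg hi, if_neg hi, h2, zero_mul, mul_zero, zero_add]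
      rw [Finset.sum_congr rfl (fun i _ => h4 i), Finset.sum_add_distrib, ← Finset.mul_sum]
      rw [← hnugdd]
      have h6 := hl1nn (Fin.last m)
      have h7 : -(fdd + ∑ i, (if g i xbar = 0 then mu0 i * gdd i else 0)) ≤ cc := by
        rw [hcc]; exact le_max_right _ _
      nlinarith [mul_nonneg hccnn h6]
end
end
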